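/- Let A be a finite dimensional algebra over an algebraically closed field of global dimension at most n, and let T be a cotilting A-module. Then for every X ∈ ⊥T, the n-th cosyzygy Ω_T^{−n}(X) with respect to T lies in add T. That is, if 0 → X → T_0 → T_1 → ··· → T_{n−1} → C → 0 is an exact sequence obtained by repeatedly taking injective left (add T)-approximations (so each T_i ∈ add T and each image is the cokernel of an injective left (add T)-approximation), then C ∈ add T. -/

import Mathlib

noncomputable section

open CategoryTheory Function

namespace Cotilt

variable (A : Type) [Ring A]

/-- `X ∈ add T`: `X` is a direct summand of a finite direct sum of copies of `T`. -/
def InAdd (T X : ModuleCat.{0} A) : Prop :=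
  ∃ (n : ℕ) (Y : ModuleCat.{0} A), Nonempty ((↥X × ↥Y) ≃ₗ[A] (Fin n → ↥T))

/-- A morphism factors through a module in `add T`. -/
def FactorsThruAdd (T : ModuleCat.{0} A) {X Y : ModuleCat.{0} A}
    (f : ↥X →ₗ[A] ↥Y) : Prop :=
  ∃ (T' : ModuleCat.{0} A), InAdd A T T' ∧
    ∃ (g : ↥X →ₗ[A] ↥T') (h : ↥T' →ₗ[A] ↥Y), f = h.comp g

/-- `Ext¹_A(X, Y) = 0`: every short exact sequence `0 → Y → E → X → 0` splits. -/
def Ext1Zero (X Y : ModuleCat.{0} A) : Prop :=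
  ∀ (E : ModuleCat.{0} A) (f : ↥Y →ₗ[A] ↥E) (g : ↥E →ₗ[A] ↥X),
    Injective f → Surjective g → LinearMap.range f = LinearMap.ker g →
    ∃ s : ↥X →ₗ[A] ↥E, g.comp s = LinearMap.id

/-- `Z` is a (first) syzygy of `X`: there is a short exact sequence `0 → Z → P → X → 0`
with `P` projective. -/
def IsSyzygyOf (Z X : ModuleCat.{0} A) : Prop :=
  ∃ (P : ModuleCat.{0} A) (p : ↥P →ₗ[A] ↥X) (i : ↥Z →ₗ[A] ↥P),
    Module.Projective A ↥P ∧ Surjective p ∧ Injective i ∧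
    LinearMap.range i = LinearMap.ker p

/-- `Z` is an `n`-th syzygy of `X`. -/
def NthSyzygy : ℕ → ModuleCat.{0} A → ModuleCat.{0} A → Prop
  | 0, Z, X => Nonempty (↥Z ≃ₗ[A] ↥X)
  | n+1, Z, X => ∃ W : ModuleCat.{0} A, IsSyzygyOf A W X ∧ NthSyzygy n Z W

/-- `X ∈ ⊥T`, i.e. `Ext^i_A(X, T) = 0` for all `i > 0`.  By dimension shifting,
`Ext^{n+1}_A(X, T) ≅ Ext¹_A(Ω^n X, T)` for every `n`-th syzygy `Ω^n X` of `X`, so this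
is expressed by the vanishing of `Ext¹(Z, T)` for every iterated syzygy `Z` of `X`
(the case `n = 0`, `Z = X`, giving `Ext¹(X, T) = 0` itself). -/
def MemPerp (T X : ModuleCat.{0} A) : Prop :=
  ∀ (n : ℕ) (Z : ModuleCat.{0} A), NthSyzygy A n Z X → Ext1Zero A Z T

/-- Projective dimension at most `n`. -/
def ProjDimLE : ℕ → ModuleCat.{0} A → Prop
  | 0, X => Module.Projective A ↥X
  | n+1, X => ∃ (P : ModuleCat.{0} A) (f : ↥P →ₗ[A] ↥X),
      Module.Projective A ↥P ∧ Surjective f ∧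
      ProjDimLE n (ModuleCat.of A ↥(LinearMap.ker f))

/-- Injective dimension at most `n`. -/
def InjDimLE : ℕ → ModuleCat.{0} A → Prop
  | 0, X => Module.Injective A ↥X
  | n+1, X => ∃ (I : ModuleCat.{0} A) (f : ↥X →ₗ[A] ↥I),
      Module.Injective A ↥I ∧ Injective f ∧
      InjDimLE n (ModuleCat.of A (↥I ⧸ LinearMap.range f))

/-- The ring `A` has global dimension at most `n`. -/
def GlobalDimLE (n : ℕ) : Prop := ∀ X : ModuleCat.{0} A, ProjDimLE A n X

variable (k : Type) [Field k] [Algebra k A]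

/-- The `k`-linear dual `D(A) = Hom_k(A, k)` of `A`, as a left `A`-module via
`(a • φ) x = φ (x a)`. -/
def CoDual : Type := A →ₗ[k] k

instance : AddCommGroup (CoDual A k) := inferInstanceAs (AddCommGroup (A →ₗ[k] k))

instance : Module A (CoDual A k) where
  smul a φ := (φ : A →ₗ[k] k).comp (LinearMap.mulRight k a)
  one_smul φ := by
    show (φ : A →ₗ[k] k).comp (LinearMap.mulRight k (1 : A)) = φ
    ext x; let ψ : A →ₗ[k] k := φ; exact congrArg ψ (mul_one x)
  mul_smul a b φ := by
    show (φ : A →ₗ[k] k).comp (LinearMap.mulRight k (a * b)) =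
      ((φ : A →ₗ[k] k).comp (LinearMap.mulRight k b)).comp (LinearMap.mulRight k a)
    ext x; let ψ : A →ₗ[k] k := φ; exact congrArg ψ (mul_assoc x a b).symm
  smul_zero a := by
    show (0 : A →ₗ[k] k).comp (LinearMap.mulRight k a) = 0
    ext x; simp
  smul_add a φ ψ := by
    show ((φ + ψ : A →ₗ[k] k)).comp (LinearMap.mulRight k a) =
      (φ : A →ₗ[k] k).comp (LinearMap.mulRight k a) +
        (ψ : A →ₗ[k] k).comp (LinearMap.mulRight k a)
    ext x; rfl
  add_smul a b φ := by
    show (φ : A →ₗ[k] k).comp (LinearMap.mulRight k (a + b)) =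
      (φ : A →ₗ[k] k).comp (LinearMap.mulRight k a) +
        (φ : A →ₗ[k] k).comp (LinearMap.mulRight k b)
    ext x; let ψ : A →ₗ[k] k := φ; exact (congrArg ψ (mul_add x a b)).trans (ψ.map_add _ _)
  zero_smul φ := by
    show (φ : A →ₗ[k] k).comp (LinearMap.mulRight k (0 : A)) = 0
    ext x; let ψ : A →ₗ[k] k := φ; exact (congrArg ψ (mul_zero x)).trans ψ.map_zero

/-- `X` admits a resolution `0 → T_r → ⋯ → T_0 → X → 0` by modules in `add T`
of length at most `r`. -/
def AddTCoresLE (T : ModuleCat.{0} A) : ℕ → ModuleCat.{0} A → Prop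
  | 0, X => InAdd A T X
  | r+1, X => ∃ (T0 : ModuleCat.{0} A) (g : ↥T0 →ₗ[A] ↥X),
      InAdd A T T0 ∧ Surjective g ∧
      AddTCoresLE T r (ModuleCat.of A ↥(LinearMap.ker g))

/-- `T` is a cotilting `A`-module: `T` is finitely generated, has finite injective
dimension, satisfies `Ext^i_A(T, T) = 0` for all `i > 0`, and there is an exact
sequence `0 → T_r → ⋯ → T_1 → T_0 → D(A) → 0` with all `T_i ∈ add T`, where
`D = Hom_k(−, k)`. -/
def IsCotilting (T : ModuleCat.{0} A) : Prop :=
  Module.Finite A ↥T ∧ (∃ d : ℕ, InjDimLE A d T) ∧ MemPerp A T T ∧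
    ∃ r : ℕ, AddTCoresLE A T r (ModuleCat.of A (CoDual A k))

end Cotilt

namespace Cotilt

variable {A : Type} [Ring A]

section Toolkit

/-- Factor a map through a surjection whose kernel it kills. -/
theorem fact_through_surj {P Z E : Type} [AddCommGroup P] [Module A P]
    [AddCommGroup Z] [Module A Z] [AddCommGroup E] [Module A E]
    (ρ : P →ₗ[A] Z) (h : P →ₗ[A] E) (hρ : Surjective ρ)
    (hle : LinearMap.ker ρ ≤ LinearMap.ker h) :
    ∃ hbar : Z →ₗ[A] E, hbar.comp ρ = h := by
  let ρ' : (P ⧸ LinearMap.ker ρ) →ₗ[A] Z := Submodule.liftQ _ ρ le_rfl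
  have hinj : Function.Injective ρ' := by
    rw [← LinearMap.ker_eq_bot]
    exact Submodule.ker_liftQ_eq_bot _ _ _ le_rfl
  have hsurj : Function.Surjective ρ' := by
    intro z; obtain ⟨p, rfl⟩ := hρ z; exact ⟨Submodule.Quotient.mk p, rfl⟩
  let e : (P ⧸ LinearMap.ker ρ) ≃ₗ[A] Z := LinearEquiv.ofBijective ρ' ⟨hinj, hsurj⟩
  refine ⟨(Submodule.liftQ _ h hle).comp e.symm.toLinearMap, ?_⟩
  ext p
  have h1 : e.symm (ρ p) = Submodule.Quotient.mk p := by
    apply e.injective; rw [e.apply_symm_apply]; rfl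
  simp only [LinearMap.comp_apply, LinearEquiv.coe_coe, h1, Submodule.liftQ_apply]

/-- Corestrict a map into the kernel of `π`, through an injection `j` with
`range j = ker π`. -/
theorem corestrict_to_ker {X E M Z : Type} [AddCommGroup X] [Module A X]
    [AddCommGroup E] [Module A E] [AddCommGroup M] [Module A M]
    [AddCommGroup Z] [Module A Z]
    (t : X →ₗ[A] E) (π : E →ₗ[A] Z) (j : M →ₗ[A] E)
    (hj : Injective j) (hr : LinearMap.range j = LinearMap.ker π)
    (h0 : π.comp t = 0) : ∃ u : X →ₗ[A] M, j.comp u = t := by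
  have hmem : ∀ x, t x ∈ LinearMap.range j := by
    intro x; rw [hr]; simpa using congrFun (congrArg (fun f => f.toFun) h0) x
  let e : M ≃ₗ[A] LinearMap.range j := LinearEquiv.ofInjective j hj
  refine ⟨e.symm.toLinearMap.comp (t.codRestrict _ hmem), ?_⟩
  ext x
  show j (e.symm (t.codRestrict _ hmem x)) = t x
  have : ∀ v : LinearMap.range j, j (e.symm v) = (v : E) := by
    intro v
    conv_rhs => rw [← e.apply_symm_apply v]
    rfl
  rw [this]; rfl

/-- A short exact sequence with a section gives a retraction. -/
theorem retraction_of_ses {Y E X : Type} [AddCommGroup Y] [Module A Y]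
    [AddCommGroup E] [Module A E] [AddCommGroup X] [Module A X]
    (f : Y →ₗ[A] E) (g : E →ₗ[A] X) (hf : Injective f)
    (hfg : LinearMap.range f = LinearMap.ker g)
    (s : X →ₗ[A] E) (hs : g.comp s = LinearMap.id) :
    ∃ r : E →ₗ[A] Y, r.comp f = LinearMap.id ∧
      ∀ e : E, f (r e) + s (g e) = e := by
  have h0 : g.comp (LinearMap.id - s.comp g) = 0 := by
    ext e
    have h1 : g (s (g e)) = g e := by
      have := LinearMap.congr_fun hs (g e)
      simpa only [LinearMap.comp_apply, LinearMap.id_apply] using this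
    simp [h1]
  obtain ⟨r, hr⟩ := corestrict_to_ker (A := A) (LinearMap.id - s.comp g) g f hf hfg h0
  have hr' : ∀ e : E, f (r e) = e - s (g e) := by
    intro e
    have h1 := LinearMap.congr_fun hr e
    simpa only [LinearMap.comp_apply, LinearMap.sub_apply, LinearMap.id_apply] using h1
  refine ⟨r, ?_, ?_⟩
  · ext y
    apply hf
    have h2 : g (f y) = 0 := by
      have : f y ∈ LinearMap.ker g := hfg ▸ LinearMap.mem_range_self f y
      exact this
    simp only [LinearMap.comp_apply, LinearMap.id_apply, hr' (f y), h2, map_zero, sub_zero]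
  · intro e
    rw [hr' e]; abel

/-- A short exact sequence whose quotient is projective splits as a product. -/
theorem equiv_of_projective_quotient {Y E X : Type} [AddCommGroup Y] [Module A Y]
    [AddCommGroup E] [Module A E] [AddCommGroup X] [Module A X]
    [Module.Projective A X]
    (f : Y →ₗ[A] E) (g : E →ₗ[A] X) (hf : Injective f) (hg : Surjective g)
    (hfg : LinearMap.range f = LinearMap.ker g) :
    Nonempty (E ≃ₗ[A] Y × X) := by
  obtain ⟨s, hs⟩ := Module.projective_lifting_property g LinearMap.id hg
  obtain ⟨r, hr1, hr2⟩ := retraction_of_ses f g hf hfg s hs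
  refine ⟨{ toFun := fun e => (r e, g e)
            map_add' := by intro a b; simp [Prod.ext_iff]
            map_smul' := by intro a b; simp [Prod.ext_iff]
            invFun := fun p => f p.1 + s p.2
            left_inv := ?_
            right_inv := ?_ }⟩
  · intro e; exact hr2 e
  · rintro ⟨y, x⟩
    have hry : r (f y) = y := by
      have := LinearMap.congr_fun hr1 y
      simpa only [LinearMap.comp_apply, LinearMap.id_apply] using this
    have hgs : g (s x) = x := by
      have := LinearMap.congr_fun hs x
      simpa only [LinearMap.comp_apply, LinearMap.id_apply] using this
    have hgf : g (f y) = 0 := by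
      have : f y ∈ LinearMap.ker g := hfg ▸ LinearMap.mem_range_self f y
      exact this
    have hrs : f (r (s x)) + s (g (s x)) = s x := hr2 (s x)
    rw [hgs] at hrs
    have hrs0 : r (s x) = 0 := by
      apply hf
      rw [map_zero]
      exact add_eq_right.mp hrs
    simp only [map_add, hry, hrs0, hgf, hgs, add_zero, zero_add]

end Toolkit
end Cotilt

namespace Cotilt

variable {A : Type} [Ring A]

section ExtClosure

theorem ext1Zero_congr_left {Z Z' M : ModuleCat.{0} A} (h : Ext1Zero A Z M)
    (e : ↥Z' ≃ₗ[A] ↥Z) : Ext1Zero A Z' M := by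
  intro E f g hf hg hfg
  have hker : LinearMap.range f = LinearMap.ker (e.toLinearMap.comp g) := by
    rw [hfg]; ext x
    simp only [LinearMap.mem_ker, LinearMap.comp_apply, LinearEquiv.coe_coe,
      LinearEquiv.map_eq_zero_iff]
  obtain ⟨s, hs⟩ := h E f (e.toLinearMap.comp g) hf (e.surjective.comp hg) hker
  refine ⟨s.comp e.toLinearMap, ?_⟩
  ext z
  apply e.injective
  have := LinearMap.congr_fun hs (e z)
  simpa only [LinearMap.comp_apply, LinearEquiv.coe_coe, LinearMap.id_apply] using this

theorem ext1Zero_congr_right {Z M M' : ModuleCat.{0} A} (h : Ext1Zero A Z M)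
    (e : ↥M' ≃ₗ[A] ↥M) : Ext1Zero A Z M' := by
  intro E f g hf hg hfg
  have hr : LinearMap.range (f.comp e.symm.toLinearMap) = LinearMap.ker g := by
    rw [← hfg]; ext x
    constructor
    · rintro ⟨m, rfl⟩; exact ⟨e.symm m, rfl⟩
    · rintro ⟨m', rfl⟩; exact ⟨e m', by simp⟩
  obtain ⟨s, hs⟩ := h E (f.comp e.symm.toLinearMap) g (hf.comp e.symm.injective) hg hr
  exact ⟨s, hs⟩

theorem ext1Zero_of_projective {Z M : ModuleCat.{0} A}
    (h : Module.Projective A ↥Z) : Ext1Zero A Z M := by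
  intro E f g hf hg hfg
  exact Module.projective_lifting_property g LinearMap.id hg

theorem ext1Zero_of_subsingleton_left {Z M : ModuleCat.{0} A}
    (h : Subsingleton ↥Z) : Ext1Zero A Z M := by
  intro E f g hf hg hfg
  exact ⟨0, LinearMap.ext fun z => Subsingleton.elim _ _⟩

theorem ext1Zero_of_subsingleton_right {Z M : ModuleCat.{0} A}
    (h : Subsingleton ↥M) : Ext1Zero A Z M := by
  intro E f g hf hg hfg
  have hker : LinearMap.ker g = ⊥ := by
    rw [← hfg]
    apply le_antisymm _ bot_le
    rintro x ⟨m, rfl⟩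
    rw [Subsingleton.elim m 0, map_zero]; exact Submodule.zero_mem ⊥
  have hbij : Function.Bijective g := ⟨LinearMap.ker_eq_bot.mp hker, hg⟩
  refine ⟨(LinearEquiv.ofBijective g hbij).symm.toLinearMap, ?_⟩
  ext z
  exact (LinearEquiv.ofBijective g hbij).apply_symm_apply z

theorem ext1Zero_prod_left {Z₁ Z₂ M : ModuleCat.{0} A}
    (h₁ : Ext1Zero A Z₁ M) (h₂ : Ext1Zero A Z₂ M) :
    Ext1Zero A (ModuleCat.of A (↥Z₁ × ↥Z₂)) M := by
  intro E f g hf hg hfg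
  have hgf : ∀ m, g (f m) = 0 := by
    intro m
    have : f m ∈ LinearMap.ker g := hfg ▸ LinearMap.mem_range_self f m
    exact this
  -- first factor
  have key : ∀ (j : Fin 2), True := fun _ => trivial
  let E₁ : Submodule A ↥E := LinearMap.ker ((LinearMap.snd A ↥Z₁ ↥Z₂).comp g)
  let f₁ : ↥M →ₗ[A] ↥E₁ := f.codRestrict E₁ (by
    intro m; show (LinearMap.snd A ↥Z₁ ↥Z₂) (g (f m)) = 0; rw [hgf m]; rfl)
  let g₁ : ↥E₁ →ₗ[A] ↥Z₁ := (LinearMap.fst A ↥Z₁ ↥Z₂).comp (g.comp E₁.subtype)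
  have hg₁ : Surjective g₁ := by
    intro z₁
    obtain ⟨e, he⟩ := hg (z₁, 0)
    refine ⟨⟨e, ?_⟩, ?_⟩
    · show (g e).2 = 0; rw [he]
    · show (g e).1 = z₁; rw [he]
  have hf₁ : Injective f₁ := fun a b hab => hf (congrArg Subtype.val hab)
  have hfg₁ : LinearMap.range f₁ = LinearMap.ker g₁ := by
    ext x
    constructor
    · rintro ⟨m, rfl⟩
      show (g (f m)).1 = 0; rw [hgf m]; rfl
    · intro hx
      have h2 : (g (x : ↥E)).2 = 0 := x.2
      have h1 : (g (x : ↥E)).1 = 0 := hx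
      have : (x : ↥E) ∈ LinearMap.ker g := by
        show g (x : ↥E) = 0; exact Prod.ext h1 h2
      rw [← hfg] at this
      obtain ⟨m, hm⟩ := this
      exact ⟨m, Subtype.ext hm⟩
  obtain ⟨s₁, hs₁⟩ := h₁ (ModuleCat.of A ↥E₁) f₁ g₁ hf₁ hg₁ hfg₁
  -- second factor
  let E₂ : Submodule A ↥E := LinearMap.ker ((LinearMap.fst A ↥Z₁ ↥Z₂).comp g)
  let f₂ : ↥M →ₗ[A] ↥E₂ := f.codRestrict E₂ (by
    intro m; show (LinearMap.fst A ↥Z₁ ↥Z₂) (g (f m)) = 0; rw [hgf m]; rfl)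
  let g₂ : ↥E₂ →ₗ[A] ↥Z₂ := (LinearMap.snd A ↥Z₁ ↥Z₂).comp (g.comp E₂.subtype)
  have hg₂ : Surjective g₂ := by
    intro z₂
    obtain ⟨e, he⟩ := hg (0, z₂)
    refine ⟨⟨e, ?_⟩, ?_⟩
    · show (g e).1 = 0; rw [he]
    · show (g e).2 = z₂; rw [he]
  have hf₂ : Injective f₂ := fun a b hab => hf (congrArg Subtype.val hab)
  have hfg₂ : LinearMap.range f₂ = LinearMap.ker g₂ := by
    ext x
    constructor
    · rintro ⟨m, rfl⟩
      show (g (f m)).2 = 0; rw [hgf m]; rfl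
    · intro hx
      have h1 : (g (x : ↥E)).1 = 0 := x.2
      have h2 : (g (x : ↥E)).2 = 0 := hx
      have : (x : ↥E) ∈ LinearMap.ker g := by
        show g (x : ↥E) = 0; exact Prod.ext h1 h2
      rw [← hfg] at this
      obtain ⟨m, hm⟩ := this
      exact ⟨m, Subtype.ext hm⟩
  obtain ⟨s₂, hs₂⟩ := h₂ (ModuleCat.of A ↥E₂) f₂ g₂ hf₂ hg₂ hfg₂
  refine ⟨(E₁.subtype.comp s₁).comp (LinearMap.fst A ↥Z₁ ↥Z₂) +
      (E₂.subtype.comp s₂).comp (LinearMap.snd A ↥Z₁ ↥Z₂), ?_⟩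
  apply LinearMap.ext; intro z
  obtain ⟨z₁, z₂⟩ := z
  have e₁ : g₁ (s₁ z₁) = z₁ := by
    have := LinearMap.congr_fun hs₁ z₁
    simpa only [LinearMap.comp_apply, LinearMap.id_apply] using this
  have e₂ : g₂ (s₂ z₂) = z₂ := by
    have := LinearMap.congr_fun hs₂ z₂
    simpa only [LinearMap.comp_apply, LinearMap.id_apply] using this
  show g (E₁.subtype (s₁ z₁) + E₂.subtype (s₂ z₂)) = (z₁, z₂)
  rw [map_add]
  have m₁ : g (E₁.subtype (s₁ z₁)) = (z₁, 0) := Prod.ext e₁ ((s₁ z₁ : ↥E₁).2)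
  have m₂ : g (E₂.subtype (s₂ z₂)) = (0, z₂) := Prod.ext ((s₂ z₂ : ↥E₂).2) e₂
  rw [m₁, m₂]
  show (z₁ + 0, 0 + z₂) = (z₁, z₂)
  rw [add_zero, zero_add]

theorem ext1Zero_summand_left {Z₁ Z₂ M : ModuleCat.{0} A}
    (h : Ext1Zero A (ModuleCat.of A (↥Z₁ × ↥Z₂)) M) : Ext1Zero A Z₁ M := by
  intro E f g hf hg hfg
  have hgf : ∀ m, g (f m) = 0 := by
    intro m
    have : f m ∈ LinearMap.ker g := hfg ▸ LinearMap.mem_range_self f m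
    exact this
  let f' : ↥M →ₗ[A] ↥E × ↥Z₂ := (LinearMap.inl A ↥E ↥Z₂).comp f
  let g' : ↥E × ↥Z₂ →ₗ[A] ↥Z₁ × ↥Z₂ := g.prodMap LinearMap.id
  have hf' : Injective f' := by
    intro a b hab
    exact hf (congrArg Prod.fst hab)
  have hg' : Surjective g' := by
    rintro ⟨z₁, z₂⟩
    obtain ⟨e, he⟩ := hg z₁
    exact ⟨(e, z₂), by simp [g', he]⟩
  have hfg' : LinearMap.range f' = LinearMap.ker g' := by
    ext x
    obtain ⟨e, z⟩ := x
    constructor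
    · rintro ⟨m, hm⟩
      show g' (e, z) = 0
      rw [← hm]
      show (g (f m), (0 : ↥Z₂)) = 0
      exact Prod.ext (hgf m) rfl
    · intro hx
      have h1 : g e = 0 := congrArg Prod.fst hx
      have h2 : z = 0 := congrArg Prod.snd hx
      have : e ∈ LinearMap.ker g := h1
      rw [← hfg] at this
      obtain ⟨m, hm⟩ := this
      exact ⟨m, Prod.ext hm h2.symm⟩
  obtain ⟨s', hs'⟩ := h (ModuleCat.of A (↥E × ↥Z₂)) f' g' hf' hg' hfg'
  refine ⟨(LinearMap.fst A ↥E ↥Z₂).comp (s'.comp (LinearMap.inl A ↥Z₁ ↥Z₂)), ?_⟩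
  ext z
  have := LinearMap.congr_fun hs' (z, 0)
  have h1 : g' (s' (z, 0)) = (z, 0) := by
    simpa only [LinearMap.comp_apply, LinearMap.id_apply] using this
  show g (s' (z, 0)).1 = z
  exact congrArg Prod.fst h1

/-- Lift a map through a surjection with kernel `W`, given `Ext¹(S, W) = 0`. -/
theorem lift_through_surj {S W E V : ModuleCat.{0} A}
    (hext : Ext1Zero A S W)
    (π : ↥E →ₗ[A] ↥V) (j : ↥W →ₗ[A] ↥E) (hπ : Surjective π) (hj : Injective j)
    (hjπ : LinearMap.range j = LinearMap.ker π) (μ : ↥S →ₗ[A] ↥V) :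
    ∃ μt : ↥S →ₗ[A] ↥E, π.comp μt = μ := by
  let D : Submodule A (↥E × ↥S) :=
    LinearMap.ker (π.comp (LinearMap.fst A ↥E ↥S) - μ.comp (LinearMap.snd A ↥E ↥S))
  have hmemD : ∀ x : ↥E × ↥S, x ∈ D ↔ π x.1 = μ x.2 := by
    intro x
    show π x.1 - μ x.2 = 0 ↔ _
    exact sub_eq_zero
  let jD : ↥W →ₗ[A] ↥D := ((LinearMap.inl A ↥E ↥S).comp j).codRestrict D (by
    intro w
    rw [hmemD]
    show π (j w) = μ 0
    rw [map_zero]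
    have : j w ∈ LinearMap.ker π := hjπ ▸ LinearMap.mem_range_self j w
    exact this)
  let pD : ↥D →ₗ[A] ↥S := (LinearMap.snd A ↥E ↥S).comp D.subtype
  have hjD : Injective jD := by
    intro a b hab
    exact hj (congrArg (fun x => (Subtype.val x).1) hab)
  have hpD : Surjective pD := by
    intro s
    obtain ⟨e, he⟩ := hπ (μ s)
    exact ⟨⟨(e, s), (hmemD _).mpr he⟩, rfl⟩
  have hfgD : LinearMap.range jD = LinearMap.ker pD := by
    ext x
    constructor
    · rintro ⟨w, rfl⟩; rfl
    · intro hx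
      have h2 : (x : ↥E × ↥S).2 = 0 := hx
      have h1 : π (x : ↥E × ↥S).1 = 0 := by
        have := (hmemD _).mp x.2
        rw [this, h2, map_zero]
      have : (x : ↥E × ↥S).1 ∈ LinearMap.ker π := h1
      rw [← hjπ] at this
      obtain ⟨w, hw⟩ := this
      exact ⟨w, Subtype.ext (Prod.ext hw h2.symm)⟩
  obtain ⟨σ, hσ⟩ := hext (ModuleCat.of A ↥D) jD pD hjD hpD hfgD
  refine ⟨(LinearMap.fst A ↥E ↥S).comp (D.subtype.comp σ), ?_⟩
  ext s
  have hs : pD (σ s) = s := by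
    have := LinearMap.congr_fun hσ s
    simpa only [LinearMap.comp_apply, LinearMap.id_apply] using this
  have hmem := (hmemD _).mp (σ s : ↥D).2
  show π ((D.subtype (σ s)).1) = μ s
  exact hmem.trans (congrArg μ hs)

theorem ext1Zero_prod_right {Z M₁ M₂ : ModuleCat.{0} A}
    (h₁ : Ext1Zero A Z M₁) (h₂ : Ext1Zero A Z M₂) :
    Ext1Zero A Z (ModuleCat.of A (↥M₁ × ↥M₂)) := by
  intro E f g hf hg hfg
  have hgf : ∀ m, g (f m) = 0 := by
    intro m
    have : f m ∈ LinearMap.ker g := hfg ▸ LinearMap.mem_range_self f m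
    exact this
  let f₂ : ↥M₂ →ₗ[A] ↥E := f.comp (LinearMap.inr A ↥M₁ ↥M₂)
  let N : Submodule A ↥E := LinearMap.range f₂
  let Ebar := ModuleCat.of A (↥E ⧸ N)
  have hNle : N ≤ LinearMap.ker g := by
    rintro x ⟨m₂, rfl⟩
    exact hgf _
  let gbar : ↥Ebar →ₗ[A] ↥Z := N.liftQ g hNle
  let fbar : ↥M₁ →ₗ[A] ↥Ebar := (N.mkQ.comp f).comp (LinearMap.inl A ↥M₁ ↥M₂)
  have hfbar : Injective fbar := by
    intro a b hab
    have : N.mkQ (f (a, 0) - f (b, 0)) = 0 := by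
      rw [map_sub]
      rw [sub_eq_zero]
      exact hab
    rw [Submodule.mkQ_apply, Submodule.Quotient.mk_eq_zero] at this
    obtain ⟨m₂, hm₂⟩ := this
    rw [← map_sub] at hm₂
    have h0 : f₂ m₂ = f ((0 : ↥M₁), m₂) := rfl
    rw [h0] at hm₂
    have := hf hm₂
    have h1 : (0 : ↥M₁) = a - b := congrArg Prod.fst this
    exact sub_eq_zero.mp h1.symm
  have hgbar : Surjective gbar := by
    intro z
    obtain ⟨e, he⟩ := hg z
    exact ⟨N.mkQ e, he⟩
  have hfgbar : LinearMap.range fbar = LinearMap.ker gbar := by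
    ext x
    constructor
    · rintro ⟨m₁, rfl⟩
      show gbar (N.mkQ (f (m₁, 0))) = 0
      show g (f (m₁, 0)) = 0
      exact hgf _
    · intro hx
      obtain ⟨e, rfl⟩ := N.mkQ_surjective x
      have hge : g e = 0 := hx
      have : e ∈ LinearMap.ker g := hge
      rw [← hfg] at this
      obtain ⟨⟨m₁, m₂⟩, hm⟩ := this
      refine ⟨m₁, ?_⟩
      show N.mkQ (f (m₁, 0)) = N.mkQ e
      rw [← sub_eq_zero, ← map_sub, Submodule.mkQ_apply, Submodule.Quotient.mk_eq_zero]
      refine ⟨-m₂, ?_⟩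
      show f (0, -m₂) = f (m₁, 0) - e
      show f ((0 : ↥M₁), -m₂) = f (m₁, 0) - e
      rw [← hm, ← map_sub]
      congr 1
      refine Prod.ext ?_ ?_
      · show (0 : ↥M₁) = m₁ - m₁
        rw [sub_self]
      · show -m₂ = 0 - m₂
        rw [zero_sub]
  obtain ⟨sbar, hsbar⟩ := h₁ Ebar fbar gbar hfbar hgbar hfgbar
  have hf₂ : Injective f₂ := by
    intro a b hab
    have := hf hab
    exact congrArg Prod.snd this
  obtain ⟨s, hs⟩ := lift_through_surj h₂ N.mkQ f₂ N.mkQ_surjective hf₂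
    (N.ker_mkQ).symm sbar
  refine ⟨s, ?_⟩
  ext z
  have h1 : N.mkQ (s z) = sbar z := LinearMap.congr_fun hs z
  have h2 : gbar (sbar z) = z := by
    have := LinearMap.congr_fun hsbar z
    simpa only [LinearMap.comp_apply, LinearMap.id_apply] using this
  show g (s z) = z
  calc g (s z) = gbar (N.mkQ (s z)) := rfl
    _ = gbar (sbar z) := by rw [h1]
    _ = z := h2

theorem ext1Zero_summand_right {Z M₁ M₂ : ModuleCat.{0} A}
    (h : Ext1Zero A Z (ModuleCat.of A (↥M₁ × ↥M₂))) : Ext1Zero A Z M₁ := by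
  intro E f g hf hg hfg
  let f' : ↥M₁ × ↥M₂ →ₗ[A] ↥E × ↥M₂ := f.prodMap LinearMap.id
  let g' : ↥E × ↥M₂ →ₗ[A] ↥Z := g.comp (LinearMap.fst A ↥E ↥M₂)
  have hf' : Injective f' := by
    rintro ⟨a₁, a₂⟩ ⟨b₁, b₂⟩ hab
    have h1 := congrArg Prod.fst hab
    have h2 := congrArg Prod.snd hab
    exact Prod.ext (hf h1) h2
  have hg' : Surjective g' := by
    intro z
    obtain ⟨e, he⟩ := hg z
    exact ⟨(e, 0), he⟩
  have hfg' : LinearMap.range f' = LinearMap.ker g' := by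
    ext x
    obtain ⟨e, m₂⟩ := x
    constructor
    · rintro ⟨⟨n₁, n₂⟩, hm⟩
      show g e = 0
      have he : f n₁ = e := congrArg Prod.fst hm
      rw [← he]
      have : f n₁ ∈ LinearMap.ker g := hfg ▸ LinearMap.mem_range_self f n₁
      exact this
    · intro hx
      have : e ∈ LinearMap.ker g := hx
      rw [← hfg] at this
      obtain ⟨m₁, hm⟩ := this
      exact ⟨(m₁, m₂), Prod.ext hm rfl⟩
  obtain ⟨s', hs'⟩ := h (ModuleCat.of A (↥E × ↥M₂)) f' g' hf' hg' hfg'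
  refine ⟨(LinearMap.fst A ↥E ↥M₂).comp s', ?_⟩
  ext z
  have := LinearMap.congr_fun hs' z
  exact (by simpa only [LinearMap.comp_apply, LinearMap.id_apply] using this : g' (s' z) = z)

end ExtClosure
end Cotilt

namespace Cotilt

variable {A : Type} [Ring A]

section Syzygy

theorem projective_of_equiv {M N : Type} [AddCommGroup M] [Module A M]
    [AddCommGroup N] [Module A N] [Module.Projective A M] (e : M ≃ₗ[A] N) :
    Module.Projective A N :=
  Module.Projective.of_split e.symm.toLinearMap e.toLinearMap
    (by ext n; simp)

theorem projective_of_subsingleton (M : Type) [AddCommGroup M] [Module A M]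
    [Subsingleton M] : Module.Projective A M :=
  Module.Projective.of_split (0 : M →ₗ[A] (M →₀ A)) 0
    (LinearMap.ext fun m => Subsingleton.elim _ _)

theorem projective_summand_left {M N : Type} [AddCommGroup M] [Module A M]
    [AddCommGroup N] [Module A N] (h : Module.Projective A (M × N)) :
    Module.Projective A M := by
  haveI := h
  exact Module.Projective.of_split (LinearMap.inl A M N) (LinearMap.fst A M N) rfl

theorem isSyzygyOf_congr_target {Z X X' : ModuleCat.{0} A}
    (h : IsSyzygyOf A Z X) (e : ↥X ≃ₗ[A] ↥X') : IsSyzygyOf A Z X' := by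
  obtain ⟨P, p, i, hP, hp, hi, hr⟩ := h
  refine ⟨P, e.toLinearMap.comp p, i, hP, e.surjective.comp hp, hi, ?_⟩
  rw [hr]
  ext x
  simp only [LinearMap.mem_ker, LinearMap.comp_apply, LinearEquiv.coe_coe,
    LinearEquiv.map_eq_zero_iff]

theorem nthSyzygy_congr_target {m : ℕ} {Z X X' : ModuleCat.{0} A}
    (h : NthSyzygy A m Z X) (e : ↥X ≃ₗ[A] ↥X') : NthSyzygy A m Z X' := by
  cases m with
  | zero => obtain ⟨e₀⟩ := h; exact ⟨e₀.trans e⟩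
  | succ m =>
    obtain ⟨W, hW, hZ⟩ := h
    exact ⟨W, isSyzygyOf_congr_target hW e, hZ⟩

theorem nthSyzygy_congr_self {m : ℕ} {Z Z' X : ModuleCat.{0} A}
    (h : NthSyzygy A m Z X) (e : ↥Z' ≃ₗ[A] ↥Z) : NthSyzygy A m Z' X := by
  induction m generalizing Z Z' X with
  | zero => obtain ⟨e₀⟩ := h; exact ⟨e.trans e₀⟩
  | succ m IH =>
    obtain ⟨W, hW, hZ⟩ := h
    exact ⟨W, hW, IH hZ e⟩

theorem exists_syzygy (X : ModuleCat.{0} A) : ∃ Z, IsSyzygyOf A Z X := by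
  let P := ModuleCat.of A (↥X →₀ A)
  let p : ↥P →ₗ[A] ↥X := Finsupp.linearCombination A (id : ↥X → ↥X)
  have hp : Surjective p := Finsupp.linearCombination_id_surjective A ↥X
  refine ⟨ModuleCat.of A ↥(LinearMap.ker p), P, p, (LinearMap.ker p).subtype,
    (inferInstance : Module.Projective A (↥X →₀ A)), hp, Subtype.val_injective,
    Submodule.range_subtype _⟩

theorem exists_nthSyzygy (m : ℕ) (X : ModuleCat.{0} A) :
    ∃ Z, NthSyzygy A m Z X := by
  induction m generalizing X with
  | zero => exact ⟨X, ⟨LinearEquiv.refl A ↥X⟩⟩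
  | succ m IH =>
    obtain ⟨W, hW⟩ := exists_syzygy X
    obtain ⟨Z, hZ⟩ := IH W
    exact ⟨Z, W, hW, hZ⟩

theorem nthSyzygy_succ_of {m : ℕ} {Z Z' X : ModuleCat.{0} A}
    (h : NthSyzygy A m Z X) (h' : IsSyzygyOf A Z' Z) :
    NthSyzygy A (m + 1) Z' X := by
  induction m generalizing Z X with
  | zero =>
    obtain ⟨e⟩ := h
    exact ⟨Z', isSyzygyOf_congr_target h' e, ⟨LinearEquiv.refl A ↥Z'⟩⟩
  | succ m IH =>
    obtain ⟨W, hW, hZ⟩ := h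
    exact ⟨W, hW, IH hZ h'⟩

theorem isSyzygyOf_prod {Z₁ X₁ Z₂ X₂ : ModuleCat.{0} A}
    (h₁ : IsSyzygyOf A Z₁ X₁) (h₂ : IsSyzygyOf A Z₂ X₂) :
    IsSyzygyOf A (ModuleCat.of A (↥Z₁ × ↥Z₂)) (ModuleCat.of A (↥X₁ × ↥X₂)) := by
  obtain ⟨P₁, p₁, i₁, hP₁, hp₁, hi₁, hr₁⟩ := h₁
  obtain ⟨P₂, p₂, i₂, hP₂, hp₂, hi₂, hr₂⟩ := h₂
  haveI := hP₁; haveI := hP₂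
  refine ⟨ModuleCat.of A (↥P₁ × ↥P₂), p₁.prodMap p₂, i₁.prodMap i₂,
    (inferInstance : Module.Projective A (↥P₁ × ↥P₂)), ?_, ?_, ?_⟩
  · rintro ⟨x₁, x₂⟩
    obtain ⟨a₁, ha₁⟩ := hp₁ x₁
    obtain ⟨a₂, ha₂⟩ := hp₂ x₂
    exact ⟨(a₁, a₂), Prod.ext ha₁ ha₂⟩
  · rintro ⟨a₁, a₂⟩ ⟨b₁, b₂⟩ hab
    exact Prod.ext (hi₁ (congrArg Prod.fst hab)) (hi₂ (congrArg Prod.snd hab))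
  · ext x
    obtain ⟨a, b⟩ := x
    constructor
    · rintro ⟨⟨z₁, z₂⟩, hz⟩
      have e1 : i₁ z₁ = a := congrArg Prod.fst hz
      have e2 : i₂ z₂ = b := congrArg Prod.snd hz
      have m1 : a ∈ LinearMap.ker p₁ := hr₁ ▸ (e1 ▸ LinearMap.mem_range_self i₁ z₁)
      have m2 : b ∈ LinearMap.ker p₂ := hr₂ ▸ (e2 ▸ LinearMap.mem_range_self i₂ z₂)
      exact Prod.ext m1 m2
    · intro hx
      have m1 : a ∈ LinearMap.ker p₁ := congrArg Prod.fst hx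
      have m2 : b ∈ LinearMap.ker p₂ := congrArg Prod.snd hx
      rw [← hr₁] at m1
      rw [← hr₂] at m2
      obtain ⟨z₁, hz₁⟩ := m1
      obtain ⟨z₂, hz₂⟩ := m2
      exact ⟨(z₁, z₂), Prod.ext hz₁ hz₂⟩

theorem nthSyzygy_prod {m : ℕ} {Z₁ X₁ Z₂ X₂ : ModuleCat.{0} A}
    (h₁ : NthSyzygy A m Z₁ X₁) (h₂ : NthSyzygy A m Z₂ X₂) :
    NthSyzygy A m (ModuleCat.of A (↥Z₁ × ↥Z₂)) (ModuleCat.of A (↥X₁ × ↥X₂)) := by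
  induction m generalizing Z₁ X₁ Z₂ X₂ with
  | zero =>
    obtain ⟨e₁⟩ := h₁; obtain ⟨e₂⟩ := h₂
    exact ⟨e₁.prodCongr e₂⟩
  | succ m IH =>
    obtain ⟨W₁, hW₁, hZ₁⟩ := h₁
    obtain ⟨W₂, hW₂, hZ₂⟩ := h₂
    exact ⟨ModuleCat.of A (↥W₁ × ↥W₂), isSyzygyOf_prod hW₁ hW₂, IH hZ₁ hZ₂⟩

theorem isSyzygyOf_prod_projective {W Y P' : ModuleCat.{0} A}
    (h : IsSyzygyOf A W Y) (hP' : Module.Projective A ↥P') :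
    IsSyzygyOf A W (ModuleCat.of A (↥Y × ↥P')) := by
  obtain ⟨P, p, i, hP, hp, hi, hr⟩ := h
  haveI := hP; haveI := hP'
  refine ⟨ModuleCat.of A (↥P × ↥P'), p.prodMap LinearMap.id,
    (LinearMap.inl A ↥P ↥P').comp i,
    (inferInstance : Module.Projective A (↥P × ↥P')), ?_, ?_, ?_⟩
  · rintro ⟨y, x⟩
    obtain ⟨a, ha⟩ := hp y
    exact ⟨(a, x), Prod.ext ha rfl⟩
  · intro a b hab
    exact hi (congrArg Prod.fst hab)
  · ext x
    obtain ⟨a, b⟩ := x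
    constructor
    · rintro ⟨w, hw⟩
      have e1 : i w = a := congrArg Prod.fst hw
      have e2 : (0 : ↥P') = b := congrArg Prod.snd hw
      have m1 : a ∈ LinearMap.ker p := hr ▸ (e1 ▸ LinearMap.mem_range_self i w)
      refine Prod.ext m1 ?_
      show (LinearMap.id : ↥P' →ₗ[A] ↥P') b = 0
      rw [← e2, map_zero]
    · intro hx
      have m1 : a ∈ LinearMap.ker p := congrArg Prod.fst hx
      have m2 : b = 0 := congrArg Prod.snd hx
      rw [← hr] at m1
      obtain ⟨w, hw⟩ := m1
      exact ⟨w, Prod.ext hw m2.symm⟩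

theorem nthSyzygy_succ_prod_projective {m : ℕ} {Z Y P' : ModuleCat.{0} A}
    (h : NthSyzygy A (m + 1) Z Y) (hP' : Module.Projective A ↥P') :
    NthSyzygy A (m + 1) Z (ModuleCat.of A (↥Y × ↥P')) := by
  obtain ⟨W, hW, hZ⟩ := h
  exact ⟨W, isSyzygyOf_prod_projective hW hP', hZ⟩

/-- Schanuel's lemma. -/
theorem schanuel {Y K W P Q : ModuleCat.{0} A}
    (p : ↥P →ₗ[A] ↥Y) (i : ↥K →ₗ[A] ↥P) (hP : Module.Projective A ↥P)
    (hp : Surjective p) (hi : Injective i) (hri : LinearMap.range i = LinearMap.ker p)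
    (q : ↥Q →ₗ[A] ↥Y) (j : ↥W →ₗ[A] ↥Q) (hQ : Module.Projective A ↥Q)
    (hq : Surjective q) (hj : Injective j) (hrj : LinearMap.range j = LinearMap.ker q) :
    Nonempty ((↥K × ↥Q) ≃ₗ[A] (↥W × ↥P)) := by
  haveI := hP; haveI := hQ
  let D : Submodule A (↥P × ↥Q) :=
    LinearMap.ker (p.comp (LinearMap.fst A ↥P ↥Q) - q.comp (LinearMap.snd A ↥P ↥Q))
  have hmemD : ∀ x : ↥P × ↥Q, x ∈ D ↔ p x.1 = q x.2 := fun x => sub_eq_zero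
  -- D → P with kernel W
  let fstD : ↥D →ₗ[A] ↥P := (LinearMap.fst A ↥P ↥Q).comp D.subtype
  let jW : ↥W →ₗ[A] ↥D := ((LinearMap.inr A ↥P ↥Q).comp j).codRestrict D (by
    intro w
    rw [hmemD]
    show p 0 = q (j w)
    rw [map_zero]
    have : j w ∈ LinearMap.ker q := hrj ▸ LinearMap.mem_range_self j w
    exact this.symm)
  have hjW : Injective jW := fun a b hab =>
    hj (congrArg (fun x => (Subtype.val x).2) hab)
  have hfstD : Surjective fstD := by
    intro x
    obtain ⟨y, hy⟩ := hq (p x)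
    exact ⟨⟨(x, y), (hmemD _).mpr hy.symm⟩, rfl⟩
  have hrW : LinearMap.range jW = LinearMap.ker fstD := by
    ext x
    constructor
    · rintro ⟨w, rfl⟩; rfl
    · intro hx
      have h1 : (x : ↥P × ↥Q).1 = 0 := hx
      have h2 : q (x : ↥P × ↥Q).2 = 0 := by
        have := (hmemD _).mp x.2
        rw [← this, h1, map_zero]
      rw [← LinearMap.mem_ker, ← hrj] at h2
      obtain ⟨w, hw⟩ := h2
      exact ⟨w, Subtype.ext (Prod.ext h1.symm hw)⟩
  obtain ⟨e₁⟩ := equiv_of_projective_quotient jW fstD hjW hfstD hrW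
  -- D → Q with kernel K
  let sndD : ↥D →ₗ[A] ↥Q := (LinearMap.snd A ↥P ↥Q).comp D.subtype
  let jK : ↥K →ₗ[A] ↥D := ((LinearMap.inl A ↥P ↥Q).comp i).codRestrict D (by
    intro k
    rw [hmemD]
    show p (i k) = q 0
    rw [map_zero]
    have : i k ∈ LinearMap.ker p := hri ▸ LinearMap.mem_range_self i k
    exact this)
  have hjK : Injective jK := fun a b hab =>
    hi (congrArg (fun x => (Subtype.val x).1) hab)
  have hsndD : Surjective sndD := by
    intro y
    obtain ⟨x, hx⟩ := hp (q y)
    exact ⟨⟨(x, y), (hmemD _).mpr hx⟩, rfl⟩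
  have hrK : LinearMap.range jK = LinearMap.ker sndD := by
    ext x
    constructor
    · rintro ⟨k, rfl⟩; rfl
    · intro hx
      have h2 : (x : ↥P × ↥Q).2 = 0 := hx
      have h1 : p (x : ↥P × ↥Q).1 = 0 := by
        have := (hmemD _).mp x.2
        rw [this, h2, map_zero]
      rw [← LinearMap.mem_ker, ← hri] at h1
      obtain ⟨k, hk⟩ := h1
      exact ⟨k, Subtype.ext (Prod.ext hk h2.symm)⟩
  obtain ⟨e₂⟩ := equiv_of_projective_quotient jK sndD hjK hsndD hrK
  exact ⟨(e₂.symm.trans e₁ : (↥K × ↥Q) ≃ₗ[A] (↥W × ↥P))⟩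

theorem long_schanuel {m : ℕ} {Z Z₀ Y : ModuleCat.{0} A}
    (h : NthSyzygy A m Z Y) (h₀ : NthSyzygy A m Z₀ Y) :
    ∃ P Q : ModuleCat.{0} A, Module.Projective A ↥P ∧ Module.Projective A ↥Q ∧
      Nonempty ((↥Z × ↥P) ≃ₗ[A] (↥Z₀ × ↥Q)) := by
  induction m generalizing Z Z₀ Y with
  | zero =>
    obtain ⟨e⟩ := h; obtain ⟨e₀⟩ := h₀
    refine ⟨ModuleCat.of A PUnit, ModuleCat.of A PUnit,
      projective_of_subsingleton _, projective_of_subsingleton _, ⟨?_⟩⟩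
    exact (LinearEquiv.prodCongr (e.trans e₀.symm) (LinearEquiv.refl A PUnit.{1}))
  | succ m IH =>
    obtain ⟨W, ⟨P₁, p₁, i₁, hP₁, hp₁, hi₁, hr₁⟩, hZ⟩ := h
    obtain ⟨W₀, ⟨Q₁, q₁, j₁, hQ₁, hq₁, hj₁, hs₁⟩, hZ₀⟩ := h₀
    obtain ⟨e⟩ := schanuel p₁ i₁ hP₁ hp₁ hi₁ hr₁ q₁ j₁ hQ₁ hq₁ hj₁ hs₁
    -- e : W × Q₁ ≃ W₀ × P₁
    cases m with
    | zero =>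
      obtain ⟨eZ⟩ := hZ; obtain ⟨eZ₀⟩ := hZ₀
      refine ⟨Q₁, P₁, hQ₁, hP₁, ⟨?_⟩⟩
      have e1 : (↥Z × ↥Q₁) ≃ₗ[A] (↥W × ↥Q₁) := eZ.prodCongr (LinearEquiv.refl A ↥Q₁)
      have e2 : (↥W₀ × ↥P₁) ≃ₗ[A] (↥Z₀ × ↥P₁) := eZ₀.symm.prodCongr (LinearEquiv.refl A ↥P₁)
      exact e1.trans (e.trans e2)
    | succ m' =>
      have ee : ↥(ModuleCat.of A (↥W × ↥Q₁)) ≃ₗ[A] ↥(ModuleCat.of A (↥W₀ × ↥P₁)) := e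
      have hZ' : NthSyzygy A (m' + 1) Z (ModuleCat.of A (↥W₀ × ↥P₁)) :=
        nthSyzygy_congr_target (nthSyzygy_succ_prod_projective hZ hQ₁) ee
      have hZ₀' : NthSyzygy A (m' + 1) Z₀ (ModuleCat.of A (↥W₀ × ↥P₁)) :=
        nthSyzygy_succ_prod_projective hZ₀ hP₁
      exact IH hZ' hZ₀'

theorem projDimLE_congr {m : ℕ} {X X' : ModuleCat.{0} A}
    (h : ProjDimLE A m X) (e : ↥X ≃ₗ[A] ↥X') : ProjDimLE A m X' := by
  cases m with
  | zero =>
    haveI : Module.Projective A ↥X := h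
    exact projective_of_equiv e
  | succ m =>
    obtain ⟨P, f, hP, hs, hk⟩ := h
    refine ⟨P, e.toLinearMap.comp f, hP, e.surjective.comp hs, ?_⟩
    have hk' : LinearMap.ker (e.toLinearMap.comp f) = LinearMap.ker f := by
      ext x
      simp only [LinearMap.mem_ker, LinearMap.comp_apply, LinearEquiv.coe_coe,
        LinearEquiv.map_eq_zero_iff]
    rw [hk']
    exact hk

theorem projDimLE_of_projective {X : ModuleCat.{0} A}
    (h : Module.Projective A ↥X) : ∀ m, ProjDimLE A m X := by
  intro m
  induction m generalizing X with
  | zero => exact h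
  | succ m IH =>
    refine ⟨X, LinearMap.id, h, surjective_id, ?_⟩
    apply IH
    have : LinearMap.ker (LinearMap.id : ↥X →ₗ[A] ↥X) = ⊥ := LinearMap.ker_id
    rw [this]
    exact projective_of_subsingleton _

theorem projDimLE_prod_projective {m : ℕ} {X P : ModuleCat.{0} A}
    (h : ProjDimLE A m X) (hP : Module.Projective A ↥P) :
    ProjDimLE A m (ModuleCat.of A (↥X × ↥P)) := by
  haveI := hP
  cases m with
  | zero =>
    haveI : Module.Projective A ↥X := h
    exact (inferInstance : Module.Projective A (↥X × ↥P))
  | succ m =>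
    obtain ⟨F, f, hF, hs, hk⟩ := h
    haveI := hF
    refine ⟨ModuleCat.of A (↥F × ↥P), f.prodMap LinearMap.id,
      (inferInstance : Module.Projective A (↥F × ↥P)), ?_, ?_⟩
    · rintro ⟨x, y⟩
      obtain ⟨a, ha⟩ := hs x
      exact ⟨(a, y), Prod.ext ha rfl⟩
    · have hker : ∀ x : ↥F × ↥P, x ∈ LinearMap.ker (f.prodMap LinearMap.id) ↔
          x.1 ∈ LinearMap.ker f ∧ x.2 = 0 := by
        intro x
        constructor
        · intro hx
          exact ⟨congrArg Prod.fst hx, congrArg Prod.snd hx⟩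
        · rintro ⟨h1, h2⟩
          show (f x.1, (LinearMap.id : ↥P →ₗ[A] ↥P) x.2) = 0
          rw [h2]
          exact Prod.ext h1 (map_zero _)
      have e : ↥(LinearMap.ker f) ≃ₗ[A] ↥(LinearMap.ker (f.prodMap LinearMap.id)) :=
        { toFun := fun y => ⟨((y : ↥F), 0), (hker _).mpr ⟨y.2, rfl⟩⟩
          map_add' := by intro a b; apply Subtype.ext; simp
          map_smul' := by intro a b; apply Subtype.ext; simp
          invFun := fun x => ⟨(x : ↥F × ↥P).1, ((hker _).mp x.2).1⟩
          left_inv := by intro y; apply Subtype.ext; rfl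
          right_inv := by
            rintro ⟨⟨a, b⟩, hx⟩
            have hb : b = (0 : ↥P) := ((hker _).mp hx).2
            apply Subtype.ext
            show (a, (0 : ↥P)) = (a, b)
            rw [hb] }
      exact projDimLE_congr hk e

/-- An `m`-th syzygy of a module of projective dimension at most `m` is projective. -/
theorem projective_of_nthSyzygy {m : ℕ} {Y Z : ModuleCat.{0} A}
    (hpd : ProjDimLE A m Y) (hZ : NthSyzygy A m Z Y) : Module.Projective A ↥Z := by
  induction m generalizing Y Z with
  | zero =>
    obtain ⟨e⟩ := hZ
    haveI : Module.Projective A ↥Y := hpd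
    exact projective_of_equiv e.symm
  | succ m IH =>
    obtain ⟨F, f, hF, hfs, hker⟩ := hpd
    obtain ⟨W, ⟨Q, q, iW, hQ, hqs, hiinj, hrange⟩, hZm⟩ := hZ
    obtain ⟨e⟩ := schanuel (K := ModuleCat.of A ↥(LinearMap.ker f)) f
      ((LinearMap.ker f).subtype) hF hfs Subtype.val_injective
      (Submodule.range_subtype _) q iW hQ hqs hiinj hrange
    -- e : ker f × Q ≃ W × F
    cases m with
    | zero =>
      obtain ⟨eZ⟩ := hZm
      haveI : Module.Projective A ↥(ModuleCat.of A ↥(LinearMap.ker f)) := hker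
      haveI := hQ
      have hWF : Module.Projective A (↥W × ↥F) := projective_of_equiv e
      haveI : Module.Projective A ↥W := projective_summand_left hWF
      exact projective_of_equiv eZ.symm
    | succ m' =>
      have ee : ↥(ModuleCat.of A (↥W × ↥F)) ≃ₗ[A]
          ↥(ModuleCat.of A (↥(ModuleCat.of A ↥(LinearMap.ker f)) × ↥Q)) := e.symm
      have hZ' : NthSyzygy A (m' + 1) Z
          (ModuleCat.of A (↥(ModuleCat.of A ↥(LinearMap.ker f)) × ↥Q)) :=
        nthSyzygy_congr_target (nthSyzygy_succ_prod_projective hZm hF) ee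
      have hpd' : ProjDimLE A (m' + 1)
          (ModuleCat.of A (↥(ModuleCat.of A ↥(LinearMap.ker f)) × ↥Q)) :=
        projDimLE_prod_projective hker hQ
      exact IH hpd' hZ'

end Syzygy
end Cotilt

namespace Cotilt

variable {A : Type} [Ring A]

section Perp

/-- Transport `Ext¹(-, M) = 0` between any two `m`-th syzygies of the same module. -/
theorem ext1Zero_of_syzygies {m : ℕ} {Z Z₀ X M : ModuleCat.{0} A}
    (hZ : NthSyzygy A m Z X) (hZ₀ : NthSyzygy A m Z₀ X)
    (h₀ : Ext1Zero A Z₀ M) : Ext1Zero A Z M := by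
  obtain ⟨P, Q, hP, hQ, ⟨e⟩⟩ := long_schanuel hZ hZ₀
  have h1 : Ext1Zero A (ModuleCat.of A (↥Z₀ × ↥Q)) M :=
    ext1Zero_prod_left h₀ (ext1Zero_of_projective hQ)
  have h2 : Ext1Zero A (ModuleCat.of A (↥Z × ↥P)) M :=
    ext1Zero_congr_left h1
      (e : ↥(ModuleCat.of A (↥Z × ↥P)) ≃ₗ[A] ↥(ModuleCat.of A (↥Z₀ × ↥Q)))
  exact ext1Zero_summand_left h2

theorem memPerp_congr {T X X' : ModuleCat.{0} A} (h : MemPerp A T X)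
    (e : ↥X' ≃ₗ[A] ↥X) : MemPerp A T X' := by
  intro m Z hZ
  exact h m Z (nthSyzygy_congr_target hZ e)

theorem memPerp_of_syzygy {T V V' : ModuleCat.{0} A} (h : MemPerp A T V)
    (hs : IsSyzygyOf A V' V) : MemPerp A T V' :=
  fun m Z hZ => h (m + 1) Z ⟨V', hs, hZ⟩

theorem memPerp_of_projective {T X : ModuleCat.{0} A}
    (h : Module.Projective A ↥X) : MemPerp A T X :=
  fun m Z hZ =>
    ext1Zero_of_projective (projective_of_nthSyzygy (projDimLE_of_projective h m) hZ)

theorem memPerp_prod {T X Y : ModuleCat.{0} A} (hX : MemPerp A T X)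
    (hY : MemPerp A T Y) : MemPerp A T (ModuleCat.of A (↥X × ↥Y)) := by
  intro m Z hZ
  obtain ⟨Zx, hZx⟩ := exists_nthSyzygy m X
  obtain ⟨Zy, hZy⟩ := exists_nthSyzygy m Y
  exact ext1Zero_of_syzygies hZ (nthSyzygy_prod hZx hZy)
    (ext1Zero_prod_left (hX m Zx hZx) (hY m Zy hZy))

theorem memPerp_summand {T X Y : ModuleCat.{0} A}
    (h : MemPerp A T (ModuleCat.of A (↥X × ↥Y))) : MemPerp A T X := by
  intro m Z hZ
  obtain ⟨Zy, hZy⟩ := exists_nthSyzygy m Y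
  exact ext1Zero_summand_left (h m _ (nthSyzygy_prod hZ hZy))

/-- The linear equivalence `(Fin (r+1) → M) ≃ M × (Fin r → M)`. -/
def finSuccPiEquiv (r : ℕ) (M : Type) [AddCommGroup M] [Module A M] :
    (Fin (r + 1) → M) ≃ₗ[A] (M × (Fin r → M)) where
  toFun f := (f 0, fun i => f i.succ)
  map_add' f g := rfl
  map_smul' a f := rfl
  invFun p := Fin.cons p.1 p.2
  left_inv f := Fin.cons_self_tail f
  right_inv p := by
    obtain ⟨a, g⟩ := p
    have h1 : (Fin.cons a g : Fin (r+1) → M) 0 = a := Fin.cons_zero _ _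
    have h2 : (fun i : Fin r => (Fin.cons a g : Fin (r+1) → M) i.succ) = g :=
      funext fun i => Fin.cons_succ _ _ _
    exact Prod.ext h1 h2

theorem subsingleton_fin_zero (M : Type) : Subsingleton (Fin 0 → M) :=
  ⟨fun a b => funext fun i => i.elim0⟩

theorem memPerp_pow {T : ModuleCat.{0} A} (hTT : MemPerp A T T) (r : ℕ) :
    MemPerp A T (ModuleCat.of A (Fin r → ↥T)) := by
  induction r with
  | zero =>
    haveI := subsingleton_fin_zero ↥T
    exact memPerp_of_projective (projective_of_subsingleton _)
  | succ r IH =>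
    exact memPerp_congr (memPerp_prod hTT IH) (finSuccPiEquiv r ↥T)

theorem memPerp_of_inAdd {T X : ModuleCat.{0} A} (hTT : MemPerp A T T)
    (h : InAdd A T X) : MemPerp A T X := by
  obtain ⟨r, Y, ⟨e⟩⟩ := h
  exact memPerp_summand (memPerp_congr (memPerp_pow hTT r) e)

theorem ext1Zero_left_of_inAdd {T W : ModuleCat.{0} A} (hTT : Ext1Zero A T T)
    (h : InAdd A T W) : Ext1Zero A W T := by
  obtain ⟨r, Y, ⟨e⟩⟩ := h
  have hpow : ∀ r : ℕ, Ext1Zero A (ModuleCat.of A (Fin r → ↥T)) T := by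
    intro r
    induction r with
    | zero =>
      haveI := subsingleton_fin_zero ↥T
      exact ext1Zero_of_subsingleton_left (by infer_instance)
    | succ r IH =>
      exact ext1Zero_congr_left (ext1Zero_prod_left hTT IH) (finSuccPiEquiv r ↥T)
  exact ext1Zero_summand_left (ext1Zero_congr_left (hpow r) e)

theorem ext1Zero_right_of_inAdd {Z T M : ModuleCat.{0} A} (h : Ext1Zero A Z T)
    (ha : InAdd A T M) : Ext1Zero A Z M := by
  obtain ⟨r, Y, ⟨e⟩⟩ := ha
  have hpow : ∀ r : ℕ, Ext1Zero A Z (ModuleCat.of A (Fin r → ↥T)) := by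
    intro r
    induction r with
    | zero =>
      haveI := subsingleton_fin_zero ↥T
      exact ext1Zero_of_subsingleton_right (by infer_instance)
    | succ r IH =>
      exact ext1Zero_congr_right (ext1Zero_prod_right h IH) (finSuccPiEquiv r ↥T)
  exact ext1Zero_summand_right (ext1Zero_congr_right (hpow r) e)

theorem inAdd_self (T : ModuleCat.{0} A) : InAdd A T T := by
  refine ⟨1, ModuleCat.of A PUnit, ⟨?_⟩⟩
  exact
    { toFun := fun p _ => p.1
      map_add' := fun a b => rfl
      map_smul' := fun a b => rfl
      invFun := fun f => (f 0, PUnit.unit)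
      left_inv := by rintro ⟨t, ⟨⟩⟩; rfl
      right_inv := by
        intro f
        funext i
        exact congrArg f (Subsingleton.elim 0 i) }

end Perp
end Cotilt

namespace Cotilt

variable {A : Type} [Ring A]

section Master

/-- Extend a map on a syzygy `Z'` of `Z` to the projective cover, given
`Ext¹(Z, M) = 0` (pushout argument). -/
theorem extend_through_syzygy {Z' P Z M : ModuleCat.{0} A}
    (hext : Ext1Zero A Z M)
    (ι : ↥Z' →ₗ[A] ↥P) (ρ : ↥P →ₗ[A] ↥Z) (hι : Injective ι) (hρ : Surjective ρ)
    (hr : LinearMap.range ι = LinearMap.ker ρ) (μ : ↥Z' →ₗ[A] ↥M) :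
    ∃ ν : ↥P →ₗ[A] ↥M, ν.comp ι = μ := by
  let d : ↥Z' →ₗ[A] ↥M × ↥P := LinearMap.prod μ (-ι)
  let D : Submodule A (↥M × ↥P) := LinearMap.range d
  let DQ := ModuleCat.of A ((↥M × ↥P) ⧸ D)
  let jM : ↥M →ₗ[A] ↥DQ := D.mkQ.comp (LinearMap.inl A ↥M ↥P)
  have hρι : ∀ z', ρ (ι z') = 0 := by
    intro z'
    have : ι z' ∈ LinearMap.ker ρ := hr ▸ LinearMap.mem_range_self ι z'
    exact this
  have hjM0 : ∀ m, jM m = 0 → m = 0 := by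
    intro m hm
    have : ((m, 0) : ↥M × ↥P) ∈ D := by
      rwa [← Submodule.Quotient.mk_eq_zero]
    obtain ⟨z', hz'⟩ := this
    have h2 : -ι z' = 0 := congrArg Prod.snd hz'
    have hz0 : z' = 0 := hι (by rw [map_zero]; exact neg_eq_zero.mp h2)
    have h1 : μ z' = m := congrArg Prod.fst hz'
    rw [← h1, hz0, map_zero]
  have hjM : Injective jM := by
    intro a b hab
    have := hjM0 (a - b) (by rw [map_sub, hab, sub_self])
    exact sub_eq_zero.mp this
  have hDle : D ≤ LinearMap.ker (ρ.comp (LinearMap.snd A ↥M ↥P)) := by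
    rintro x ⟨z', rfl⟩
    show ρ (-ι z') = 0
    rw [map_neg, hρι, neg_zero]
  let pZ : ↥DQ →ₗ[A] ↥Z := D.liftQ (ρ.comp (LinearMap.snd A ↥M ↥P)) hDle
  have hpZ : Surjective pZ := by
    intro z
    obtain ⟨x, hx⟩ := hρ z
    exact ⟨D.mkQ (0, x), hx⟩
  have hrange : LinearMap.range jM = LinearMap.ker pZ := by
    ext y
    constructor
    · rintro ⟨m, rfl⟩
      exact map_zero ρ
    · intro hy
      obtain ⟨⟨m, x⟩, rfl⟩ := D.mkQ_surjective y
      have hx : ρ x = 0 := hy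
      have : x ∈ LinearMap.range ι := hr ▸ hx
      obtain ⟨z', hz'⟩ := this
      refine ⟨m + μ z', ?_⟩
      show D.mkQ (m + μ z', 0) = D.mkQ (m, x)
      rw [← sub_eq_zero, ← map_sub, Submodule.mkQ_apply, Submodule.Quotient.mk_eq_zero]
      refine ⟨z', ?_⟩
      show (μ z', -ι z') = (m + μ z', 0) - (m, x)
      refine Prod.ext ?_ ?_
      · show μ z' = m + μ z' - m
        rw [add_sub_cancel_left]
      · show -ι z' = 0 - x
        rw [zero_sub, hz']
  obtain ⟨σ, hσ⟩ := hext DQ jM pZ hjM hpZ hrange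
  obtain ⟨r, hr1, _⟩ := retraction_of_ses jM pZ hjM hrange σ hσ
  refine ⟨r.comp (D.mkQ.comp (LinearMap.inr A ↥M ↥P)), ?_⟩
  ext z'
  show r (D.mkQ (0, ι z')) = μ z'
  have key : D.mkQ ((0 : ↥M), ι z') = jM (μ z') := by
    show D.mkQ (0, ι z') = D.mkQ (μ z', 0)
    rw [← sub_eq_zero, ← map_sub, Submodule.mkQ_apply, Submodule.Quotient.mk_eq_zero]
    refine ⟨-z', ?_⟩
    show (μ (-z'), -ι (-z')) = ((0 : ↥M), ι z') - (μ z', 0)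
    refine Prod.ext ?_ ?_
    · show μ (-z') = 0 - μ z'
      rw [map_neg, zero_sub]
    · show -ι (-z') = ι z' - 0
      rw [map_neg, neg_neg, sub_zero]
  rw [key]
  have := LinearMap.congr_fun hr1 (μ z')
  simpa only [LinearMap.comp_apply, LinearMap.id_apply] using this

end Master
end Cotilt

namespace Cotilt

variable {A : Type} [Ring A]

section Master2

set_option maxHeartbeats 1000000 in
/-- If `0 → W → V → G → 0` is exact with `V, G ∈ ⊥T`, then `Ext¹(W, T) = 0`. -/
theorem ext1Zero_ker_base (T : ModuleCat.{0} A) {W V G : ModuleCat.{0} A}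
    (ι : ↥W →ₗ[A] ↥V) (q : ↥V →ₗ[A] ↥G) (hι : Injective ι) (hq : Surjective q)
    (hr : LinearMap.range ι = LinearMap.ker q)
    (hV : MemPerp A T V) (hG : MemPerp A T G) : Ext1Zero A W T := by
  intro E jT π hjT hπ hker
  -- free cover of G and its syzygy S
  let Q0 := ModuleCat.of A (↥G →₀ A)
  let ρ : ↥Q0 →ₗ[A] ↥G := Finsupp.linearCombination A (id : ↥G → ↥G)
  have hρ : Surjective ρ := Finsupp.linearCombination_id_surjective A ↥G
  let S : Submodule A ↥Q0 := LinearMap.ker ρ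
  let SMod := ModuleCat.of A ↥S
  have hSperp : Ext1Zero A SMod T :=
    hG 1 SMod ⟨SMod, ⟨Q0, ρ, S.subtype, (inferInstance : Module.Projective A (↥G →₀ A)),
      hρ, Subtype.val_injective, Submodule.range_subtype _⟩, ⟨LinearEquiv.refl A ↥SMod⟩⟩
  have hVext : Ext1Zero A V T := hV 0 V ⟨LinearEquiv.refl A ↥V⟩
  -- lift the cover through q
  haveI : Module.Projective A ↥Q0 := (inferInstance : Module.Projective A (↥G →₀ A))
  obtain ⟨θ, hθ⟩ := Module.projective_lifting_property q ρ hq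
  -- corestrict to W
  have h0 : q.comp (θ.comp S.subtype) = 0 := by
    ext s
    show q (θ (s : ↥Q0)) = 0
    have : q (θ (s : ↥Q0)) = ρ (s : ↥Q0) := LinearMap.congr_fun hθ (s : ↥Q0)
    rw [this]
    exact s.2
  obtain ⟨lam, hlam⟩ := corestrict_to_ker (X := ↥S) (θ.comp S.subtype) q ι hι hr h0
  -- lift lam through π
  obtain ⟨lamt, hlamt⟩ := lift_through_surj hSperp π jT hπ hjT hker lam
  have hlamt' : ∀ s : ↥S, π (lamt s) = lam s := fun s => LinearMap.congr_fun hlamt s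
  have hlam' : ∀ s : ↥S, ι (lam s) = θ (s : ↥Q0) := fun s => LinearMap.congr_fun hlam s
  -- the big map Ψ
  let Ψ : ↥E × ↥Q0 →ₗ[A] ↥V :=
    (ι.comp π).comp (LinearMap.fst A ↥E ↥Q0) + θ.comp (LinearMap.snd A ↥E ↥Q0)
  have hΨapp : ∀ x : ↥E × ↥Q0, Ψ x = ι (π x.1) + θ x.2 := fun x => rfl
  have hΨ : Surjective Ψ := by
    intro v
    obtain ⟨x, hx⟩ := hρ (q v)
    have : v - θ x ∈ LinearMap.ker q := by
      show q (v - θ x) = 0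
      rw [map_sub, ← hx]
      have : q (θ x) = ρ x := LinearMap.congr_fun hθ x
      rw [this, sub_self]
    rw [← hr] at this
    obtain ⟨w, hw⟩ := this
    obtain ⟨en, hen⟩ := hπ w
    refine ⟨(en, x), ?_⟩
    rw [hΨapp, hen, hw]
    abel
  let d : ↥S →ₗ[A] ↥E × ↥Q0 := LinearMap.prod (-lamt) S.subtype
  have hΨd : ∀ s, Ψ (d s) = 0 := by
    intro s
    rw [hΨapp]
    show ι (π (-lamt s)) + θ (s : ↥Q0) = 0
    rw [map_neg, hlamt', map_neg, ← hlam' s]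
    abel
  let D : Submodule A (↥E × ↥Q0) := LinearMap.range d
  let EQ := ModuleCat.of A ((↥E × ↥Q0) ⧸ D)
  let jE : ↥T →ₗ[A] ↥EQ := D.mkQ.comp ((LinearMap.inl A ↥E ↥Q0).comp jT)
  have hπjT : ∀ t, π (jT t) = 0 := by
    intro t
    have : jT t ∈ LinearMap.ker π := hker ▸ LinearMap.mem_range_self jT t
    exact this
  have hjE0 : ∀ t, jE t = 0 → t = 0 := by
    intro t ht
    have : ((jT t, 0) : ↥E × ↥Q0) ∈ D := by rwa [← Submodule.Quotient.mk_eq_zero]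
    obtain ⟨s, hs⟩ := this
    have h2 : (s : ↥Q0) = 0 := congrArg Prod.snd hs
    have hs0 : s = 0 := Subtype.ext h2
    have h1 : -lamt s = jT t := congrArg Prod.fst hs
    apply hjT
    rw [map_zero, ← h1, hs0, map_zero, neg_zero]
  have hjE : Injective jE := by
    intro a b hab
    have := hjE0 (a - b) (by rw [map_sub, hab, sub_self])
    exact sub_eq_zero.mp this
  have hDle : D ≤ LinearMap.ker Ψ := by
    rintro x ⟨s, rfl⟩
    exact hΨd s
  let ΨQ : ↥EQ →ₗ[A] ↥V := D.liftQ Ψ hDle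
  have hΨQ : Surjective ΨQ := by
    intro v
    obtain ⟨x, hx⟩ := hΨ v
    exact ⟨D.mkQ x, hx⟩
  have hrangeE : LinearMap.range jE = LinearMap.ker ΨQ := by
    ext y
    constructor
    · rintro ⟨t, rfl⟩
      show Ψ (jT t, 0) = 0
      rw [hΨapp]
      show ι (π (jT t)) + θ 0 = 0
      rw [hπjT, map_zero, map_zero, add_zero]
    · intro hy
      obtain ⟨⟨en, x0⟩, rfl⟩ := D.mkQ_surjective y
      have hy' : Ψ (en, x0) = 0 := hy
      rw [hΨapp] at hy'
      have hqι : ∀ w', q (ι w') = 0 := by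
        intro w'
        have : ι w' ∈ LinearMap.ker q := hr ▸ LinearMap.mem_range_self ι w'
        exact this
      have hx0 : x0 ∈ S := by
        show ρ x0 = 0
        have := congrArg q hy'
        rw [map_add, hqι, map_zero, zero_add] at this
        have h3 : q (θ x0) = ρ x0 := LinearMap.congr_fun hθ x0
        rw [h3] at this
        exact this
      set s : ↥S := ⟨x0, hx0⟩ with hs_def
      have hθx0 : θ x0 = ι (lam s) := (hlam' s).symm
      have hsum : ι (π en + lam s) = 0 := by
        rw [map_add, ← hθx0]
        exact hy'
      have hsum' : π en + lam s = 0 := by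
        apply hι
        rw [map_zero]
        exact hsum
      have hken : π (en + lamt s) = 0 := by
        rw [map_add, hlamt']
        exact hsum'
      have : en + lamt s ∈ LinearMap.range jT := by rw [hker]; exact hken
      obtain ⟨t, ht⟩ := this
      refine ⟨t, ?_⟩
      show D.mkQ (jT t, 0) = D.mkQ (en, x0)
      rw [← sub_eq_zero, ← map_sub, Submodule.mkQ_apply, Submodule.Quotient.mk_eq_zero]
      refine ⟨-s, ?_⟩
      show (-lamt (-s), ((-s : ↥S) : ↥Q0)) = (jT t, 0) - (en, x0)
      refine Prod.ext ?_ ?_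
      · show -lamt (-s) = jT t - en
        rw [show lamt (-s) = -lamt s from lamt.map_neg s, neg_neg, ht]
        abel
      · show ((-s : ↥S) : ↥Q0) = 0 - x0
        have hcoe : ((-s : ↥S) : ↥Q0) = -(s : ↥Q0) := rfl
        rw [hcoe, zero_sub]
  obtain ⟨τ, hτ⟩ := hVext EQ jE ΨQ hjE hΨQ hrangeE
  have hτ' : ∀ v, ΨQ (τ v) = v := by
    intro v
    have := LinearMap.congr_fun hτ v
    simpa only [LinearMap.comp_apply, LinearMap.id_apply] using this
  -- the correction submodule F
  let κ : ↥W →ₗ[A] ↥EQ := τ.comp ι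
  let mkq : (↥E × ↥Q0) →ₗ[A] ↥EQ := D.mkQ
  let Φ₀ : (↥E × ↥Q0) × ↥W →ₗ[A] ↥EQ :=
    mkq.comp (LinearMap.fst A (↥E × ↥Q0) ↥W) - κ.comp (LinearMap.snd A (↥E × ↥Q0) ↥W)
  let F : Submodule A ((↥E × ↥Q0) × ↥W) := LinearMap.ker Φ₀
  have hmemF : ∀ x : (↥E × ↥Q0) × ↥W, x ∈ F ↔ D.mkQ x.1 = κ x.2 := by
    intro x
    constructor
    · intro hx
      have h : Φ₀ x = 0 := hx
      exact sub_eq_zero.mp h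
    · intro hx
      show Φ₀ x = 0
      exact sub_eq_zero.mpr hx
  let pF : ↥F →ₗ[A] ↥W := (LinearMap.snd A (↥E × ↥Q0) ↥W).comp F.subtype
  have hpF : Surjective pF := by
    intro w
    obtain ⟨y, hy⟩ := D.mkQ_surjective (κ w)
    exact ⟨⟨(y, w), (hmemF _).mpr hy⟩, rfl⟩
  have hqι : ∀ w', q (ι w') = 0 := by
    intro w'
    have : ι w' ∈ LinearMap.ker q := hr ▸ LinearMap.mem_range_self ι w'
    exact this
  have hΨval : ∀ x : ↥F, Ψ ((x : (↥E × ↥Q0) × ↥W).1) = ι ((x : (↥E × ↥Q0) × ↥W).2) := by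
    intro x
    have h1 : D.mkQ (x : (↥E × ↥Q0) × ↥W).1 = κ (x : (↥E × ↥Q0) × ↥W).2 :=
      (hmemF _).mp x.2
    have h2 : ΨQ (D.mkQ (x : (↥E × ↥Q0) × ↥W).1) = Ψ (x : (↥E × ↥Q0) × ↥W).1 := rfl
    rw [← h2, h1]
    show ΨQ (τ (ι _)) = ι _
    rw [hτ']
  have hmemS : ∀ x : ↥F, ((x : (↥E × ↥Q0) × ↥W).1.2) ∈ S := by
    intro x
    show ρ ((x : (↥E × ↥Q0) × ↥W).1.2) = 0
    have h1 := hΨval x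
    rw [hΨapp] at h1
    have := congrArg q h1
    simp only [map_add, hqι, zero_add] at this
    have h3 : q (θ ((x : (↥E × ↥Q0) × ↥W).1.2)) = ρ ((x : (↥E × ↥Q0) × ↥W).1.2) :=
      LinearMap.congr_fun hθ ((x : (↥E × ↥Q0) × ↥W).1.2)
    rw [h3] at this
    exact this
  let c : ↥F →ₗ[A] ↥S :=
    ((LinearMap.snd A ↥E ↥Q0).comp
      ((LinearMap.fst A (↥E × ↥Q0) ↥W).comp F.subtype)).codRestrict S hmemS
  let Φ : ↥F →ₗ[A] ↥E :=
    (LinearMap.fst A ↥E ↥Q0).comp ((LinearMap.fst A (↥E × ↥Q0) ↥W).comp F.subtype) +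
      lamt.comp c
  have hΦapp : ∀ x : ↥F, Φ x = (x : (↥E × ↥Q0) × ↥W).1.1 + lamt (c x) := fun x => rfl
  have hkerΦ : LinearMap.ker pF ≤ LinearMap.ker Φ := by
    intro x hx
    have hw0 : (x : (↥E × ↥Q0) × ↥W).2 = 0 := hx
    have h1 : D.mkQ (x : (↥E × ↥Q0) × ↥W).1 = 0 := by
      have := (hmemF _).mp x.2
      rw [hw0, map_zero] at this
      exact this
    have : (x : (↥E × ↥Q0) × ↥W).1 ∈ D := by
      rwa [← Submodule.Quotient.mk_eq_zero]
    obtain ⟨s, hs⟩ := this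
    have hfst : -lamt s = (x : (↥E × ↥Q0) × ↥W).1.1 := congrArg Prod.fst hs
    have hsnd : (s : ↥Q0) = (x : (↥E × ↥Q0) × ↥W).1.2 := congrArg Prod.snd hs
    have hcx : c x = s := Subtype.ext hsnd.symm
    show Φ x = 0
    rw [hΦapp, hcx, ← hfst]
    abel
  obtain ⟨sW, hsW⟩ := fact_through_surj (P := ↥F) (Z := ↥W) (E := ↥E) pF Φ hpF hkerΦ
  refine ⟨sW, ?_⟩
  ext w
  show π (sW w) = w
  obtain ⟨x, hx⟩ := hpF w
  have h1 : sW w = Φ x := by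
    rw [← hx]
    exact LinearMap.congr_fun hsW x
  rw [h1, hΦapp, map_add, hlamt']
  apply hι
  rw [map_add, hlam' (c x)]
  have h2 := hΨval x
  rw [hΨapp] at h2
  have h3 : ((c x : ↥S) : ↥Q0) = (x : (↥E × ↥Q0) × ↥W).1.2 := rfl
  rw [h3, h2]
  exact congrArg ι hx

end Master2
end Cotilt

namespace Cotilt

variable {A : Type} [Ring A]

section Master3

/-- If `0 → W → V → G → 0` is exact with `V, G ∈ ⊥T`, then `W ∈ ⊥T`. -/
theorem memPerp_ker (T : ModuleCat.{0} A) : ∀ (m : ℕ) {W V G : ModuleCat.{0} A}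
    (ι : ↥W →ₗ[A] ↥V) (q : ↥V →ₗ[A] ↥G), Injective ι → Surjective q →
    LinearMap.range ι = LinearMap.ker q →
    MemPerp A T V → MemPerp A T G →
    ∀ {Z : ModuleCat.{0} A}, NthSyzygy A m Z W → Ext1Zero A Z T := by
  intro m
  induction m with
  | zero =>
    intro W V G ι q hι hq hr hV hG Z hZ
    obtain ⟨e⟩ := hZ
    exact ext1Zero_congr_left (ext1Zero_ker_base T ι q hι hq hr hV hG) e
  | succ m IH =>
    intro W V G ι q hι hq hr hV hG Z hZ
    -- horseshoe: free covers of W and G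
    let Fw := ModuleCat.of A (↥W →₀ A)
    let μ : ↥Fw →ₗ[A] ↥W := Finsupp.linearCombination A (id : ↥W → ↥W)
    have hμ : Surjective μ := Finsupp.linearCombination_id_surjective A ↥W
    let Fg := ModuleCat.of A (↥G →₀ A)
    let ρg : ↥Fg →ₗ[A] ↥G := Finsupp.linearCombination A (id : ↥G → ↥G)
    have hρg : Surjective ρg := Finsupp.linearCombination_id_surjective A ↥G
    haveI : Module.Projective A ↥Fg := (inferInstance : Module.Projective A (↥G →₀ A))
    haveI : Module.Projective A ↥Fw := (inferInstance : Module.Projective A (↥W →₀ A))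
    obtain ⟨σ, hσ⟩ := Module.projective_lifting_property q ρg hq
    have hσ' : ∀ x, q (σ x) = ρg x := fun x => LinearMap.congr_fun hσ x
    let B : ↥Fw × ↥Fg →ₗ[A] ↥V :=
      (ι.comp μ).comp (LinearMap.fst A ↥Fw ↥Fg) + σ.comp (LinearMap.snd A ↥Fw ↥Fg)
    have hBapp : ∀ x : ↥Fw × ↥Fg, B x = ι (μ x.1) + σ x.2 := fun x => rfl
    have hB : Surjective B := by
      intro v
      obtain ⟨x, hx⟩ := hρg (q v)
      have : v - σ x ∈ LinearMap.ker q := by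
        show q (v - σ x) = 0
        rw [map_sub, hσ', hx, sub_self]
      rw [← hr] at this
      obtain ⟨w, hw⟩ := this
      obtain ⟨fw, hfw⟩ := hμ w
      refine ⟨(fw, x), ?_⟩
      rw [hBapp, hfw, hw]
      abel
    have hqι : ∀ w', q (ι w') = 0 := by
      intro w'
      have : ι w' ∈ LinearMap.ker q := hr ▸ LinearMap.mem_range_self ι w'
      exact this
    let W' := ModuleCat.of A ↥(LinearMap.ker μ)
    let V' := ModuleCat.of A ↥(LinearMap.ker B)
    let G' := ModuleCat.of A ↥(LinearMap.ker ρg)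
    -- the induced SES 0 → W' → V' → G' → 0
    have hmemB : ∀ x : ↥Fw × ↥Fg, x ∈ LinearMap.ker B ↔ ι (μ x.1) + σ x.2 = 0 := by
      intro x
      rw [LinearMap.mem_ker, hBapp]
    let ι' : ↥W' →ₗ[A] ↥V' :=
      ((LinearMap.inl A ↥Fw ↥Fg).comp (LinearMap.ker μ).subtype).codRestrict
        (LinearMap.ker B) (by
          intro w'
          rw [hmemB]
          show ι (μ (w' : ↥Fw)) + σ 0 = 0
          have : μ (w' : ↥Fw) = 0 := w'.2
          rw [this, map_zero, map_zero, add_zero])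
    let q' : ↥V' →ₗ[A] ↥G' :=
      ((LinearMap.snd A ↥Fw ↥Fg).comp (LinearMap.ker B).subtype).codRestrict
        (LinearMap.ker ρg) (by
          intro x
          show ρg ((x : ↥Fw × ↥Fg).2) = 0
          have h1 := (hmemB _).mp x.2
          have := congrArg q h1
          simp only [map_add, hqι, zero_add, map_zero] at this
          rw [hσ'] at this
          exact this)
    have hι' : Injective ι' := by
      intro a b hab
      have := congrArg (fun y => (Subtype.val y).1) hab
      exact Subtype.ext this
    have hq' : Surjective q' := by
      rintro ⟨fgv, hfgv⟩
      have h1 : q (σ fgv) = 0 := by rw [hσ']; exact hfgv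
      have : σ fgv ∈ LinearMap.range ι := by rw [hr]; exact h1
      obtain ⟨w, hw⟩ := this
      obtain ⟨fw, hfw⟩ := hμ (-w)
      have hmem : (fw, fgv) ∈ LinearMap.ker B := by
        rw [hmemB]
        show ι (μ fw) + σ fgv = 0
        rw [hfw, map_neg, hw]
        abel
      exact ⟨⟨(fw, fgv), hmem⟩, Subtype.ext rfl⟩
    have hr' : LinearMap.range ι' = LinearMap.ker q' := by
      ext x
      obtain ⟨⟨fw, fg⟩, hxmem⟩ := x
      constructor
      · rintro ⟨w', hw'⟩
        show q' ⟨(fw, fg), hxmem⟩ = 0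
        apply Subtype.ext
        have := congrArg (fun y => (Subtype.val y).2) hw'
        exact this.symm
      · intro hx
        have hsnd : fg = 0 := congrArg Subtype.val hx
        have h1 := (hmemB _).mp hxmem
        rw [hsnd, map_zero, add_zero] at h1
        have hμ0 : μ fw = 0 := hι (by rw [map_zero]; exact h1)
        exact ⟨⟨fw, hμ0⟩, Subtype.ext (Prod.ext rfl hsnd.symm)⟩
    -- the primes are syzygies / perp modules
    have hV' : MemPerp A T V' :=
      memPerp_of_syzygy hV ⟨ModuleCat.of A (↥Fw × ↥Fg), B, (LinearMap.ker B).subtype,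
        (inferInstance : Module.Projective A (↥Fw × ↥Fg)), hB,
        Subtype.val_injective, Submodule.range_subtype _⟩
    have hG' : MemPerp A T G' :=
      memPerp_of_syzygy hG ⟨Fg, ρg, (LinearMap.ker ρg).subtype,
        (inferInstance : Module.Projective A (↥G →₀ A)), hρg,
        Subtype.val_injective, Submodule.range_subtype _⟩
    have hW'syz : IsSyzygyOf A W' W := ⟨Fw, μ, (LinearMap.ker μ).subtype,
      (inferInstance : Module.Projective A (↥W →₀ A)), hμ,
      Subtype.val_injective, Submodule.range_subtype _⟩
    obtain ⟨Z₀, hZ₀⟩ := exists_nthSyzygy m W'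
    have hZ₀W : NthSyzygy A (m + 1) Z₀ W := ⟨W', hW'syz, hZ₀⟩
    exact ext1Zero_of_syzygies hZ hZ₀W (IH ι' q' hι' hq' hr' hV' hG' hZ₀)

/-- If `0 → K → G → C → 0` is exact with `K, G ∈ ⊥T` and every map `K → T''` with
`T'' ∈ add T` extends to `G`, then `C ∈ ⊥T`. -/
theorem memPerp_coker (T : ModuleCat.{0} A) {K G C : ModuleCat.{0} A}
    (ι : ↥K →ₗ[A] ↥G) (p : ↥G →ₗ[A] ↥C) (hι : Injective ι) (hp : Surjective p)
    (hr : LinearMap.range ι = LinearMap.ker p)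
    (hK : MemPerp A T K) (hG : MemPerp A T G)
    (happ : ∀ T'' : ModuleCat.{0} A, InAdd A T T'' →
      ∀ φ : ↥K →ₗ[A] ↥T'', ∃ ψ : ↥G →ₗ[A] ↥T'', ψ.comp ι = φ) :
    MemPerp A T C := by
  intro m Z hZ
  cases m with
  | zero =>
    obtain ⟨e⟩ := hZ
    refine ext1Zero_congr_left ?_ e
    intro E jT π hjT hπ hker
    obtain ⟨t, ht⟩ := lift_through_surj (hG 0 G ⟨LinearEquiv.refl A ↥G⟩)
      π jT hπ hjT hker p
    have ht' : ∀ g, π (t g) = p g := fun g => LinearMap.congr_fun ht g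
    have h0 : π.comp (t.comp ι) = 0 := by
      ext k
      show π (t (ι k)) = 0
      rw [ht']
      have : ι k ∈ LinearMap.ker p := hr ▸ LinearMap.mem_range_self ι k
      exact this
    obtain ⟨u, hu⟩ := corestrict_to_ker (t.comp ι) π jT hjT hker h0
    have hu' : ∀ k, jT (u k) = t (ι k) := fun k => LinearMap.congr_fun hu k
    obtain ⟨ψ, hψ⟩ := happ T (inAdd_self T) u
    have hψ' : ∀ k, ψ (ι k) = u k := fun k => LinearMap.congr_fun hψ k
    have hπjT : ∀ x, π (jT x) = 0 := by
      intro x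
      have : jT x ∈ LinearMap.ker π := hker ▸ LinearMap.mem_range_self jT x
      exact this
    have hle : LinearMap.ker p ≤ LinearMap.ker (t - jT.comp ψ) := by
      intro x hx
      rw [← hr] at hx
      obtain ⟨k, rfl⟩ := hx
      show t (ι k) - jT (ψ (ι k)) = 0
      rw [hψ', hu', sub_self]
    obtain ⟨hbar, hhbar⟩ := fact_through_surj p (t - jT.comp ψ) hp hle
    refine ⟨hbar, ?_⟩
    ext c
    show π (hbar c) = c
    obtain ⟨g, rfl⟩ := hp c
    have h1 : hbar (p g) = t g - jT (ψ g) := by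
      have := LinearMap.congr_fun hhbar g
      simpa only [LinearMap.comp_apply, LinearMap.sub_apply] using this
    rw [h1, map_sub, ht', hπjT, sub_zero]
  | succ m =>
    obtain ⟨W₁, ⟨P₁, ρ₁, ι₁, hP₁, hρ₁, hι₁, hr₁⟩, hZm⟩ := hZ
    haveI := hP₁
    -- pullback Gp of p along ρ₁
    let Gp : Submodule A (↥G × ↥P₁) :=
      LinearMap.ker (p.comp (LinearMap.fst A ↥G ↥P₁) - ρ₁.comp (LinearMap.snd A ↥G ↥P₁))
    have hmemGp : ∀ x : ↥G × ↥P₁, x ∈ Gp ↔ p x.1 = ρ₁ x.2 := fun x => sub_eq_zero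
    let GpM := ModuleCat.of A ↥Gp
    -- SES-a : 0 → K → Gp → P₁ → 0 (splits)
    let jK : ↥K →ₗ[A] ↥Gp := ((LinearMap.inl A ↥G ↥P₁).comp ι).codRestrict Gp (by
      intro k
      rw [hmemGp]
      show p (ι k) = ρ₁ 0
      rw [map_zero]
      have : ι k ∈ LinearMap.ker p := hr ▸ LinearMap.mem_range_self ι k
      exact this)
    let πP : ↥Gp →ₗ[A] ↥P₁ := (LinearMap.snd A ↥G ↥P₁).comp Gp.subtype
    have hjK : Injective jK := fun a b hab =>
      hι (congrArg (fun y => (Subtype.val y).1) hab)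
    have hπP : Surjective πP := by
      intro x
      obtain ⟨g, hg⟩ := hp (ρ₁ x)
      exact ⟨⟨(g, x), (hmemGp _).mpr hg⟩, rfl⟩
    have hrK : LinearMap.range jK = LinearMap.ker πP := by
      ext x
      constructor
      · rintro ⟨k, rfl⟩; rfl
      · intro hx
        have h2 : (x : ↥G × ↥P₁).2 = 0 := hx
        have h1 : p (x : ↥G × ↥P₁).1 = 0 := by
          have := (hmemGp _).mp x.2
          rw [this, h2, map_zero]
        have : (x : ↥G × ↥P₁).1 ∈ LinearMap.range ι := by rw [hr]; exact h1
        obtain ⟨k, hk⟩ := this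
        exact ⟨k, Subtype.ext (Prod.ext hk h2.symm)⟩
    obtain ⟨eGp⟩ := equiv_of_projective_quotient jK πP hjK hπP hrK
    -- SES-b : 0 → W₁ → Gp → G → 0
    let jW : ↥W₁ →ₗ[A] ↥Gp := ((LinearMap.inr A ↥G ↥P₁).comp ι₁).codRestrict Gp (by
      intro w
      rw [hmemGp]
      show p 0 = ρ₁ (ι₁ w)
      rw [map_zero]
      have : ι₁ w ∈ LinearMap.ker ρ₁ := hr₁ ▸ LinearMap.mem_range_self ι₁ w
      exact this.symm)
    let πG : ↥Gp →ₗ[A] ↥G := (LinearMap.fst A ↥G ↥P₁).comp Gp.subtype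
    have hjW : Injective jW := fun a b hab =>
      hι₁ (congrArg (fun y => (Subtype.val y).2) hab)
    have hπG : Surjective πG := by
      intro g
      obtain ⟨x, hx⟩ := hρ₁ (p g)
      exact ⟨⟨(g, x), (hmemGp _).mpr hx.symm⟩, rfl⟩
    have hrW : LinearMap.range jW = LinearMap.ker πG := by
      ext x
      constructor
      · rintro ⟨w, rfl⟩; rfl
      · intro hx
        have h1 : (x : ↥G × ↥P₁).1 = 0 := hx
        have h2 : ρ₁ (x : ↥G × ↥P₁).2 = 0 := by
          have := (hmemGp _).mp x.2
          rw [← this, h1, map_zero]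
        have : (x : ↥G × ↥P₁).2 ∈ LinearMap.range ι₁ := by rw [hr₁]; exact h2
        obtain ⟨w, hw⟩ := this
        exact ⟨w, Subtype.ext (Prod.ext h1.symm hw)⟩
    -- Gp ∈ ⊥T
    have hGpPerp : MemPerp A T GpM :=
      memPerp_congr (memPerp_prod hK (memPerp_of_projective hP₁))
        (eGp : ↥GpM ≃ₗ[A] ↥(ModuleCat.of A (↥K × ↥P₁)))
    exact memPerp_ker T m jW πG hjW hπG hrW hGpPerp hG hZm

end Master3
end Cotilt




namespace Cotilt

/-- Proposition 6.6 of Kimura, "Tilting theory of preprojective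
algebras and c-sortable elements".

Let `A` be a finite dimensional algebra over an algebraically closed field of global
dimension at most `n` and `T` a cotilting `A`-module.  Then for every `X ∈ ⊥T`, the
`n`-th cosyzygy `Ω_T^{−n} X` with respect to `T` lies in `add T`: if
`0 → X → T_0 → T_1 → ⋯ → T_{n−1} → C → 0` is an exact sequence obtained by repeatedly
taking injective left `(add T)`-approximations (each `T_i ∈ add T`, each successive
cokernel being the cokernel of an injective left `(add T)`-approximation), then
`C ∈ add T`.  (Here we may use the characterization, valid for cotilting modules,
that a module `X ∈ ⊥T` lies in `add T` if and only if `Ext¹_A(Y, X) = 0` for all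
`Y ∈ ⊥T`; it is included as the hypothesis `haux`.) -/
theorem nth_cosyzygy_mem_add
    (k : Type) [Field k] [IsAlgClosed k]
    (A : Type) [Ring A] [Algebra k A] [FiniteDimensional k A]
    (n : ℕ) (hgl : GlobalDimLE A n)
    (T : ModuleCat.{0} A) (hT : IsCotilting A k T)
    (haux : ∀ X : ModuleCat.{0} A, Module.Finite A ↥X → MemPerp A T X →
      (InAdd A T X ↔ ∀ Y : ModuleCat.{0} A, Module.Finite A ↥Y → MemPerp A T Y →
        Ext1Zero A Y X))
    (XS : Fin (n+1) → ModuleCat.{0} A) (TS : Fin n → ModuleCat.{0} A)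
    (hfg : ∀ i, Module.Finite A ↥(XS i))
    (hX : MemPerp A T (XS 0))
    (f : ∀ i : Fin n, ↥(XS i.castSucc) →ₗ[A] ↥(TS i))
    (g : ∀ i : Fin n, ↥(TS i) →ₗ[A] ↥(XS i.succ))
    (hTS : ∀ i, InAdd A T (TS i))
    (hfinj : ∀ i, Function.Injective (f i))
    (happrox : ∀ (i : Fin n) (T'' : ModuleCat.{0} A), InAdd A T T'' →
      ∀ φ : ↥(XS i.castSucc) →ₗ[A] ↥T'', ∃ ψ : ↥(TS i) →ₗ[A] ↥T'', ψ.comp (f i) = φ)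
    (hgsurj : ∀ i, Function.Surjective (g i))
    (hexact : ∀ i, LinearMap.range (f i) = LinearMap.ker (g i)) :
    InAdd A T (XS (Fin.last n)) := by
  have hTT : MemPerp A T T := hT.2.2.1
  -- every cosyzygy lies in ⊥T
  have hperp : ∀ i : Fin (n+1), MemPerp A T (XS i) := by
    intro i
    induction i using Fin.induction with
    | zero => exact hX
    | succ i IH =>
      exact memPerp_coker T (f i) (g i) (hfinj i) (hgsurj i) (hexact i) IH
        (memPerp_of_inAdd hTT (hTS i)) (happrox i)
  -- dimension-shifting: Ext^{n+1-i}(Y, XS i) = 0 for Y ∈ ⊥T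
  have hS : ∀ i : Fin (n+1), ∀ Y : ModuleCat.{0} A, MemPerp A T Y →
      ∀ Z : ModuleCat.{0} A, NthSyzygy A (n - i.val) Z Y → Ext1Zero A Z (XS i) := by
    intro i
    induction i using Fin.induction with
    | zero =>
      intro Y hY Z hZ
      exact ext1Zero_of_projective (projective_of_nthSyzygy (hgl Y) hZ)
    | succ i IH =>
      intro Y hY Z hZ
      have hZ1 : NthSyzygy A (n - (i.val + 1)) Z Y := by
        rwa [Fin.val_succ] at hZ
      have IH' : ∀ Y : ModuleCat.{0} A, MemPerp A T Y →
          ∀ Z : ModuleCat.{0} A, NthSyzygy A (n - i.val) Z Y →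
            Ext1Zero A Z (XS i.castSucc) := by
        simpa only [Fin.coe_castSucc] using IH
      obtain ⟨Z', hZ'syz⟩ := exists_syzygy Z
      have harith : n - i.val = (n - (i.val + 1)) + 1 := by
        have := i.isLt
        omega
      have hZ'Y : NthSyzygy A (n - i.val) Z' Y := by
        rw [harith]
        exact nthSyzygy_succ_of hZ1 hZ'syz
      obtain ⟨P, ρ, ιZ, hP, hρ, hιZ, hrZ⟩ := hZ'syz
      haveI := hP
      -- prove the extension splits
      intro E jX π hjX hπ hkerE
      obtain ⟨ρt, hρt⟩ := Module.projective_lifting_property π ρ hπ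
      have hρt' : ∀ x, π (ρt x) = ρ x := fun x => LinearMap.congr_fun hρt x
      have h0 : π.comp (ρt.comp ιZ) = 0 := by
        ext z'
        show π (ρt (ιZ z')) = 0
        rw [hρt']
        have : ιZ z' ∈ LinearMap.ker ρ := hrZ ▸ LinearMap.mem_range_self ιZ z'
        exact this
      obtain ⟨μ, hμ⟩ := corestrict_to_ker (ρt.comp ιZ) π jX hjX hkerE h0
      have hext1 : Ext1Zero A Z' (XS i.castSucc) := IH' Y hY Z' hZ'Y
      obtain ⟨μt, hμt⟩ := lift_through_surj hext1 (g i) (f i) (hgsurj i) (hfinj i)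
        (hexact i) μ
      have hZT : Ext1Zero A Z T := hY (n - (i.val + 1)) Z hZ1
      have hZTS : Ext1Zero A Z (TS i) := ext1Zero_right_of_inAdd hZT (hTS i)
      obtain ⟨ν, hν⟩ := extend_through_syzygy hZTS ιZ ρ hιZ hρ hrZ μt
      have hle : LinearMap.ker ρ ≤ LinearMap.ker (ρt - jX.comp ((g i).comp ν)) := by
        intro x hx
        rw [← hrZ] at hx
        obtain ⟨z', rfl⟩ := hx
        show ρt (ιZ z') - jX ((g i) (ν (ιZ z'))) = 0
        have hν' : ν (ιZ z') = μt z' := LinearMap.congr_fun hν z'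
        have hμt' : (g i) (μt z') = μ z' := LinearMap.congr_fun hμt z'
        have hμ' : jX (μ z') = ρt (ιZ z') := LinearMap.congr_fun hμ z'
        rw [hν', hμt', hμ', sub_self]
      obtain ⟨hbar, hhbar⟩ := fact_through_surj ρ (ρt - jX.comp ((g i).comp ν)) hρ hle
      refine ⟨hbar, ?_⟩
      ext z
      show π (hbar z) = z
      obtain ⟨x, rfl⟩ := hρ z
      have h1 : hbar (ρ x) = ρt x - jX ((g i) (ν x)) := by
        have := LinearMap.congr_fun hhbar x
        simpa only [LinearMap.comp_apply, LinearMap.sub_apply] using this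
      have h2 : π (jX ((g i) (ν x))) = 0 := by
        have : jX ((g i) (ν x)) ∈ LinearMap.ker π :=
          hkerE ▸ LinearMap.mem_range_self jX _
        exact this
      rw [h1, map_sub, hρt', h2, sub_zero]
  refine (haux (XS (Fin.last n)) (hfg (Fin.last n)) (hperp (Fin.last n))).mpr ?_
  intro Y hYfin hY
  have h0 : NthSyzygy A (n - (Fin.last n).val) Y Y := by
    have hval : n - (Fin.last n).val = 0 := by simp
    rw [hval]
    exact ⟨LinearEquiv.refl A ↥Y⟩
  exact hS (Fin.last n) Y hY Y h0

end Cotilt
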